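/- arXiv:1803.01055 — 5 statements merged into one kernel-verified Lean document; each statement's English description precedes it below -/
import Mathlib

section
/- Let G be a simple graph with a vertex v and let k ≥ 1 be an integer. If the induced subgraph G \ v has a k-uniform 0-11-representant (i.e., G \ v is word-representable by a word in which every vertex occurs exactly k times), then G is (k−1)-11-representable. -/
/-- Number of occurrences of the consecutive pattern 11 in a word,
i.e. the number of positions `i` with `u i = u (i+1)`. -/
def pattern11Count {V : Type*} [DecidableEq V] (u : List V) : ℕ :=
  (u.zip u.tail).countP (fun p => decide (p.1 = p.2))

/-- `w` is a `k`-11-representant of the simple graph `G`: every vertex occurs in `w`,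
and two distinct vertices are adjacent iff the subword of `w` induced by them contains
at most `k` occurrences of the consecutive pattern 11. -/
def IsK11Rep {V : Type*} [DecidableEq V] (G : SimpleGraph V) (k : ℕ) (w : List V) : Prop :=
  (∀ v : V, v ∈ w) ∧
  ∀ x y : V, x ≠ y →
    (G.Adj x y ↔ pattern11Count (w.filter (fun a => decide (a = x ∨ a = y))) ≤ k)

/-- A simple graph is `k`-11-representable if it has a `k`-11-representant. -/
def K11Representable {V : Type*} [DecidableEq V] (G : SimpleGraph V) (k : ℕ) : Prop :=
  ∃ w : List V, IsK11Rep G k w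

/-- A graph is `t`-uniformly `k`-11-representable if it has a `k`-11-representant in which
every vertex occurs exactly `t` times. -/
def UniformK11Rep {V : Type*} [DecidableEq V] (G : SimpleGraph V) (t k : ℕ) : Prop :=
  ∃ w : List V, IsK11Rep G k w ∧ ∀ v : V, w.count v = t

/-- The final permutation `σ(w)`: distinct letters of `w` in order of last occurrence. -/
def finalPerm {V : Type*} [DecidableEq V] (w : List V) : List V := w.dedup

/-- The initial permutation `π(w)`: distinct letters of `w` in order of first occurrence. -/
def initPerm {V : Type*} [DecidableEq V] (w : List V) : List V := (w.reverse.dedup).reverse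

namespace K11Aux


variable {V : Type*} [DecidableEq V]

def p11 : List V → ℕ
  | [] => 0
  | [_] => 0
  | a :: b :: t => (if a = b then 1 else 0) + p11 (b :: t)

@[simp] lemma p11_nil : p11 ([] : List V) = 0 := rfl
@[simp] lemma p11_single (a : V) : p11 [a] = 0 := rfl
@[simp] lemma p11_cons_cons (a b : V) (t : List V) :
    p11 (a :: b :: t) = (if a = b then 1 else 0) + p11 (b :: t) := rfl

lemma p11_cons (a : V) (t : List V) :
    p11 (a :: t) = (if t.head? = some a then 1 else 0) + p11 t := by
  cases t with
  | nil => simp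
  | cons b t' =>
    simp only [p11_cons_cons, List.head?_cons]
    congr 1
    by_cases h : a = b <;> simp [h, eq_comm]

lemma pattern11Count_eq (u : List V) : pattern11Count u = p11 u := by
  induction u with
  | nil => rfl
  | cons a t ih =>
    cases t with
    | nil => rfl
    | cons b t' =>
      have : pattern11Count (a :: b :: t') =
          (if a = b then 1 else 0) + pattern11Count (b :: t') := by
        simp [pattern11Count, List.countP_cons]
        by_cases h : a = b <;> simp [h, Nat.add_comm]
      rw [this, ih, p11_cons_cons]

lemma p11_map {W : Type*} [DecidableEq W] (f : V → W) (hf : Function.Injective f) :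
    ∀ l : List V, p11 (l.map f) = p11 l
  | [] => rfl
  | [_] => rfl
  | a :: b :: t => by
    have := p11_map f hf (b :: t)
    simp only [List.map_cons] at this ⊢
    rw [p11_cons_cons, p11_cons_cons, this]
    congr 1
    by_cases h : a = b
    · simp [h]
    · simp only [h, if_false]
      rw [if_neg (fun hh => h (hf hh))]

lemma p11_replicate (n : ℕ) (x : V) : p11 (List.replicate n x) = n - 1 := by
  induction n with
  | zero => simp
  | succ m ih =>
    cases m with
    | zero => simp
    | succ m' =>
      rw [List.replicate_succ, List.replicate_succ]
      rw [p11_cons_cons, ← List.replicate_succ, ih]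
      simp
      omega


variable {V : Type*} [DecidableEq V]

def firsts : List V → List V
  | [] => []
  | a :: l => a :: firsts (l.filter (fun b => decide (b ≠ a)))
termination_by l => l.length
decreasing_by
  simp only [List.length_cons]
  exact Nat.lt_succ_of_le (by rw [List.length_unattach]; exact (List.length_filter_le _ _).trans (by simp))

@[simp] lemma firsts_nil : firsts ([] : List V) = [] := by rw [firsts]

lemma firsts_cons (a : V) (l : List V) :
    firsts (a :: l) = a :: firsts (l.filter (fun b => decide (b ≠ a))) := by rw [firsts]

lemma mem_firsts_aux : ∀ (n : ℕ) (l : List V), l.length ≤ n →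
    ∀ x, (x ∈ firsts l ↔ x ∈ l) := by
  intro n
  induction n with
  | zero =>
    intro l hl x
    rw [Nat.le_zero, List.length_eq_zero_iff] at hl
    subst hl; simp
  | succ n ih =>
    intro l hl x
    cases l with
    | nil => simp
    | cons a t =>
      rw [firsts_cons]
      simp only [List.mem_cons]
      have ht : (t.filter (fun b => decide (b ≠ a))).length ≤ n := by
        have := List.length_filter_le (fun b => decide (b ≠ a)) t
        simp only [List.length_cons] at hl
        omega
      rw [ih _ ht]
      simp only [List.mem_filter, decide_eq_true_eq]
      constructor
      · rintro (rfl | ⟨hx, _⟩)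
        · left; rfl
        · right; exact hx
      · rintro (rfl | hx)
        · left; rfl
        · by_cases hxa : x = a
          · left; exact hxa
          · right; exact ⟨hx, hxa⟩

lemma mem_firsts (l : List V) (x : V) : x ∈ firsts l ↔ x ∈ l :=
  mem_firsts_aux l.length l le_rfl x

lemma count_firsts_aux : ∀ (n : ℕ) (l : List V), l.length ≤ n →
    ∀ x, x ∈ l → (firsts l).count x = 1 := by
  intro n
  induction n with
  | zero =>
    intro l hl x hx
    rw [Nat.le_zero, List.length_eq_zero_iff] at hl
    subst hl; simp at hx
  | succ n ih =>
    intro l hl x hx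
    cases l with
    | nil => simp at hx
    | cons a t =>
      rw [firsts_cons]
      have ht : (t.filter (fun b => decide (b ≠ a))).length ≤ n := by
        have := List.length_filter_le (fun b => decide (b ≠ a)) t
        simp only [List.length_cons] at hl
        omega
      by_cases hxa : x = a
      · subst hxa
        rw [List.count_cons_self]
        have : x ∉ firsts (t.filter (fun b => decide (b ≠ x))) := by
          rw [mem_firsts]
          simp
        rw [List.count_eq_zero_of_not_mem this]
      · rw [List.count_cons_of_ne (Ne.symm hxa)]
        apply ih _ ht
        simp only [List.mem_filter, decide_eq_true_eq]
        rcases List.mem_cons.mp hx with h | h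
        · exact absurd h hxa
        · exact ⟨h, hxa⟩

lemma count_firsts (l : List V) (x : V) (hx : x ∈ l) : (firsts l).count x = 1 :=
  count_firsts_aux l.length l le_rfl x hx

variable {V : Type*} [DecidableEq V]

def two (x y : V) : V → Bool := fun c => decide (c = x ∨ c = y)

lemma two_self_left (x y : V) : two x y x = true := by simp [two]
lemma two_self_right (x y : V) : two x y y = true := by simp [two]
lemma two_comm (x y : V) : two x y = two y x := by
  funext c; simp [two, or_comm]

lemma filter_two_of_not_mem (l : List V) (x y : V) (hx : x ∉ l) (hy : y ∉ l) :
    l.filter (two x y) = [] := by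
  rw [List.filter_eq_nil_iff]
  intro a ha
  simp only [two, decide_eq_true_eq]
  rintro (rfl | rfl)
  · exact hx ha
  · exact hy ha

lemma firsts_filter_two_single_aux : ∀ (n : ℕ) (l : List V), l.length ≤ n →
    ∀ x y, y ∈ l → x ∉ l → (firsts l).filter (two x y) = [y] := by
  intro n
  induction n with
  | zero =>
    intro l hl x y hy _
    rw [Nat.le_zero, List.length_eq_zero_iff] at hl
    subst hl; simp at hy
  | succ n ih =>
    intro l hl x y hy hx
    cases l with
    | nil => simp at hy
    | cons c t =>
      have ht : (t.filter (fun b => decide (b ≠ c))).length ≤ n := by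
        have := List.length_filter_le (fun b => decide (b ≠ c)) t
        simp only [List.length_cons] at hl
        omega
      rw [firsts_cons]
      by_cases hcy : c = y
      · subst hcy
        rw [List.filter_cons, if_pos (two_self_right x c)]
        have h0 : (firsts (t.filter (fun b => decide (b ≠ c)))).filter (two x c) = [] := by
          apply filter_two_of_not_mem
          · intro hmem
            rw [mem_firsts] at hmem
            exact hx (List.mem_cons_of_mem _ ((List.mem_filter.mp hmem).1))
          · intro hmem
            rw [mem_firsts, List.mem_filter] at hmem
            simp at hmem
        rw [h0]
      · have hcx : c ≠ x := by rintro rfl; exact hx List.mem_cons_self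
        have : two x y c = false := by
          simp only [two, decide_eq_false_iff_not]
          rintro (rfl | rfl)
          · exact hcx rfl
          · exact hcy rfl
        rw [List.filter_cons, if_neg (by simp [this])]
        apply ih _ ht
        · rw [List.mem_filter]
          refine ⟨?_, by simpa using fun h : y = c => hcy h.symm⟩
          rcases List.mem_cons.mp hy with h | h
          · exact absurd h (fun hh => hcy hh.symm)
          · exact h
        · intro hmem
          exact hx (List.mem_cons_of_mem _ ((List.mem_filter.mp hmem).1))

lemma firsts_filter_two_single (l : List V) (x y : V) (hy : y ∈ l) (hx : x ∉ l) :
    (firsts l).filter (two x y) = [y] :=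
  firsts_filter_two_single_aux l.length l le_rfl x y hy hx

lemma key_aux : ∀ (n : ℕ) (l : List V), l.length ≤ n → ∀ x y : V, x ≠ y → x ∈ l → y ∈ l →
    ∃ a b, ((a = x ∧ b = y) ∨ (a = y ∧ b = x)) ∧
      (firsts l).filter (two x y) = [a, b] ∧
      (l.filter (two x y)).head? = some a := by
  intro n
  induction n with
  | zero =>
    intro l hl x y _ hx _
    rw [Nat.le_zero, List.length_eq_zero_iff] at hl
    subst hl; simp at hx
  | succ n ih =>
    intro l hl x y hxy hx hy
    cases l with
    | nil => simp at hx
    | cons c t =>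
      have ht : (t.filter (fun b => decide (b ≠ c))).length ≤ n := by
        have := List.length_filter_le (fun b => decide (b ≠ c)) t
        simp only [List.length_cons] at hl
        omega
      by_cases hcx : c = x
      · subst hcx
        refine ⟨c, y, Or.inl ⟨rfl, rfl⟩, ?_, ?_⟩
        · rw [firsts_cons, List.filter_cons, if_pos (two_self_left c y)]
          congr 1
          apply firsts_filter_two_single
          · rw [List.mem_filter]
            refine ⟨?_, by simpa using fun h : y = c => hxy h.symm⟩
            rcases List.mem_cons.mp hy with h | h
            · exact absurd h (fun hh => hxy hh.symm)
            · exact h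
          · intro hmem
            rw [List.mem_filter] at hmem
            simp at hmem
        · rw [List.filter_cons, if_pos (two_self_left c y)]
          rfl
      · by_cases hcy : c = y
        · subst hcy
          refine ⟨c, x, Or.inr ⟨rfl, rfl⟩, ?_, ?_⟩
          · rw [firsts_cons, List.filter_cons, if_pos (two_self_right x c)]
            congr 1
            rw [two_comm]
            apply firsts_filter_two_single
            · rw [List.mem_filter]
              refine ⟨?_, by simpa using fun h : x = c => hcx h.symm⟩
              rcases List.mem_cons.mp hx with h | h
              · exact absurd h (fun hh => hcx hh.symm)
              · exact h
            · intro hmem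
              rw [List.mem_filter] at hmem
              simp at hmem
          · rw [List.filter_cons, if_pos (two_self_right x c)]
            rfl
        · have hc2 : two x y c = false := by
            simp only [two, decide_eq_false_iff_not]
            rintro (rfl | rfl)
            · exact hcx rfl
            · exact hcy rfl
          have hxt : x ∈ t.filter (fun b => decide (b ≠ c)) := by
            rw [List.mem_filter]
            refine ⟨?_, by simpa using fun h : x = c => hcx h.symm⟩
            rcases List.mem_cons.mp hx with h | h
            · exact absurd h (fun hh => hcx hh.symm)
            · exact h
          have hyt : y ∈ t.filter (fun b => decide (b ≠ c)) := by
            rw [List.mem_filter]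
            refine ⟨?_, by simpa using fun h : y = c => hcy h.symm⟩
            rcases List.mem_cons.mp hy with h | h
            · exact absurd h (fun hh => hcy hh.symm)
            · exact h
          obtain ⟨a, b, hab, hfil, hhead⟩ := ih _ ht x y hxy hxt hyt
          have hpass : (t.filter (fun b => decide (b ≠ c))).filter (two x y)
              = t.filter (two x y) := by
            rw [List.filter_filter]
            apply List.filter_congr
            intro a' _
            by_cases h2 : two x y a' = true
            · have : a' ≠ c := by
                rcases (by simpa [two] using h2 : a' = x ∨ a' = y) with rfl | rfl
                · exact fun hh => hcx hh.symm
                · exact fun hh => hcy hh.symm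
              simp [h2, this]
            · simp only [Bool.not_eq_true] at h2
              simp [h2]
          refine ⟨a, b, hab, ?_, ?_⟩
          · rw [firsts_cons, List.filter_cons, if_neg (by simp [hc2])]
            rw [← hfil]
          · rw [List.filter_cons, if_neg (by simp [hc2])]
            rw [← hpass]
            exact hhead

lemma key (l : List V) (x y : V) (hxy : x ≠ y) (hx : x ∈ l) (hy : y ∈ l) :
    ∃ a b, ((a = x ∧ b = y) ∨ (a = y ∧ b = x)) ∧
      (firsts l).filter (two x y) = [a, b] ∧
      (l.filter (two x y)).head? = some a :=
  key_aux l.length l le_rfl x y hxy hx hy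

/-- alternating 2-blocks, ending with the block `[a, b]`. -/
def Dw : ℕ → V → V → List V
  | 0, _, _ => []
  | m + 1, a, b => Dw m b a ++ [a, b]

lemma Dp11 : ∀ (m : ℕ) (a b : V), a ≠ b → ∀ T : List V,
    p11 (Dw (m + 1) a b ++ T) = m + (if T.head? = some b then 1 else 0) + p11 T := by
  intro m
  induction m with
  | zero =>
    intro a b hab T
    show p11 ([] ++ [a, b] ++ T) = _
    rw [List.nil_append, List.cons_append, List.cons_append, List.nil_append]
    rw [p11_cons_cons, if_neg hab, p11_cons]
    omega
  | succ m ih =>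
    intro a b hab T
    show p11 (Dw (m + 1) b a ++ [a, b] ++ T) = _
    rw [List.append_assoc]
    rw [ih b a (fun h => hab h.symm) ([a, b] ++ T)]
    have h1 : (([a, b] ++ T) : List V).head? = some a := rfl
    rw [h1, if_pos rfl]
    have h2 : p11 ([a, b] ++ T) = (if T.head? = some b then 1 else 0) + p11 T := by
      rw [List.cons_append, List.cons_append, List.nil_append, p11_cons_cons, if_neg hab,
        p11_cons]
      omega
    rw [h2]
    omega

/-- alternating `[x, v]` blocks. -/
def Fw (x v : V) : ℕ → List V
  | 0 => []
  | m + 1 => Fw x v m ++ [x, v]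

lemma Fp11_of_head_ne : ∀ (m : ℕ) (x v : V), x ≠ v → ∀ T : List V,
    T.head? ≠ some v → p11 (Fw x v m ++ T) = p11 T := by
  intro m
  induction m with
  | zero => intro x v _ T _; rfl
  | succ m ih =>
    intro x v hxv T hT
    show p11 (Fw x v m ++ [x, v] ++ T) = _
    rw [List.append_assoc, ih x v hxv ([x, v] ++ T) (by rintro h; simp at h; exact hxv h)]
    rw [List.cons_append, List.cons_append, List.nil_append, p11_cons_cons, if_neg hxv, p11_cons]
    rw [if_neg hT]
    omega

lemma Fp11_vv (m : ℕ) (x v : V) (hxv : x ≠ v) (rest : List V)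
    (hrest : rest.head? ≠ some v) :
    p11 (Fw x v (m + 1) ++ (v :: rest)) = 1 + p11 rest := by
  show p11 (Fw x v m ++ [x, v] ++ (v :: rest)) = _
  rw [List.append_assoc, Fp11_of_head_ne m x v hxv _ (by rintro h; simp at h; exact hxv h)]
  rw [List.cons_append, List.cons_append, List.nil_append, p11_cons_cons, if_neg hxv,
    p11_cons_cons, if_pos rfl, p11_cons, if_neg hrest]
  omega

/-- the v-separated zone of alternating blocks; the last block is `q`. -/
def Zb (v : V) : ℕ → List V → List V
  | 0, _ => []
  | m + 1, q => Zb v m q.reverse ++ (q ++ [v])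

lemma Zb_filter_pair (v : V) (p : V → Bool) (hv : p v = false) :
    ∀ (m : ℕ) (q : List V) (a b : V), q.filter p = [a, b] →
      (Zb v m q).filter p = Dw m a b := by
  intro m
  induction m with
  | zero => intro q a b _; rfl
  | succ m ih =>
    intro q a b hq
    show (Zb v m q.reverse ++ (q ++ [v])).filter p = Dw m b a ++ [a, b]
    rw [List.filter_append, List.filter_append]
    rw [ih q.reverse b a (by rw [List.filter_reverse, hq]; rfl)]
    rw [hq, List.filter_cons, if_neg (by simp [hv]), List.filter_nil, List.append_nil]

lemma Zb_filter_single (v : V) (p : V → Bool) (hv : p v = true) :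
    ∀ (m : ℕ) (q : List V) (x : V), q.filter p = [x] →
      (Zb v m q).filter p = Fw x v m := by
  intro m
  induction m with
  | zero => intro q x _; rfl
  | succ m ih =>
    intro q x hq
    show (Zb v m q.reverse ++ (q ++ [v])).filter p = Fw x v m ++ [x, v]
    rw [List.filter_append, List.filter_append]
    rw [ih q.reverse x (by rw [List.filter_reverse, hq]; rfl)]
    rw [hq, List.filter_cons, if_pos hv, List.filter_nil]
    rfl

lemma filter_eq_single (l : List V) (q : V → Bool) (x : V) (h1 : l.count x = 1)
    (h2 : ∀ c ∈ l, q c = true ↔ c = x) : l.filter q = [x] := by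
  have he : l.filter q = l.filter (· = x) := by
    apply List.filter_congr
    intro c hc
    by_cases h : c = x
    · subst h; simp [(h2 c hc).mpr rfl]
    · have hqc : q c = false := by
        cases hq : q c
        · rfl
        · exact absurd ((h2 c hc).mp hq) h
      simp [hqc, h]
  rw [he, List.filter_eq, h1, List.replicate_one]

lemma p11_eq_zero_of_nodup : ∀ l : List V, l.Nodup → p11 l = 0
  | [] => fun _ => rfl
  | [_] => fun _ => rfl
  | a :: b :: t => fun hn => by
    rw [p11_cons_cons, if_neg (by
      intro hab
      exact (List.nodup_cons.mp hn).1 (hab ▸ (List.mem_cons_self : b ∈ b :: t))),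
      p11_eq_zero_of_nodup (b :: t) (List.nodup_cons.mp hn).2]

end K11Aux

open K11Aux in
/-- if `G \ v` has a `k`-uniform word-representant (`k ≥ 1`),
then `G` is `(k-1)`-11-representable. -/
theorem k11Representable_of_uniform_wordRep_deleteVertex {V : Type*} [DecidableEq V]
    [Fintype V] (G : SimpleGraph V) (v : V) (k : ℕ) (hk : 1 ≤ k)
    (h : UniformK11Rep (G.induce {u : V | u ≠ v}) k 0) :
    K11Representable G (k - 1) := by
  classical
  obtain ⟨w, ⟨hmem, hadj⟩, hcnt⟩ := h
  set w' : List V := w.map Subtype.val with hw'def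
  have hvw' : v ∉ w' := by
    intro hvmem
    rw [hw'def, List.mem_map] at hvmem
    obtain ⟨a, _, ha⟩ := hvmem
    exact a.property ha
  have hmem' : ∀ x : V, x ≠ v → x ∈ w' := by
    intro x hx
    rw [hw'def, List.mem_map]
    exact ⟨⟨x, hx⟩, hmem _, rfl⟩
  have hcnt' : ∀ x : V, x ≠ v → w'.count x = k := by
    intro x hx
    rw [hw'def,
      show x = (⟨x, hx⟩ : {u : V | u ≠ v}).val from rfl,
      List.count_map_of_injective _ _ Subtype.val_injective]
    convert hcnt ⟨x, hx⟩ using 2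
    exact lawful_beq_subsingleton _ _
  have hadj' : ∀ x y : V, x ≠ v → y ≠ v → x ≠ y →
      (G.Adj x y ↔ p11 (w'.filter (two x y)) = 0) := by
    intro x y hx hy hxy
    have hne : (⟨x, hx⟩ : {u : V | u ≠ v}) ≠ ⟨y, hy⟩ := by
      intro hh; exact hxy (congrArg Subtype.val hh)
    have hiff := hadj ⟨x, hx⟩ ⟨y, hy⟩ hne
    have hL : (G.induce {u : V | u ≠ v}).Adj ⟨x, hx⟩ ⟨y, hy⟩ ↔ G.Adj x y := by
      simp
    have hfil : w'.filter (two x y) =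
        (w.filter (fun a => decide (a = (⟨x, hx⟩ : {u : V | u ≠ v}) ∨
          a = (⟨y, hy⟩ : {u : V | u ≠ v})))).map Subtype.val := by
      rw [hw'def, List.filter_map]
      congr 1
      apply List.filter_congr
      intro a _
      show decide (a.val = x ∨ a.val = y) = decide (a = ⟨x, hx⟩ ∨ a = ⟨y, hy⟩)
      apply decide_eq_decide.mpr
      constructor
      · rintro (h1 | h1)
        · left; exact Subtype.ext h1
        · right; exact Subtype.ext h1
      · rintro (rfl | rfl)
        · left; rfl
        · right; rfl
    have hrw : pattern11Count (w.filter (fun a => decide (a = (⟨x, hx⟩ : {u : V | u ≠ v}) ∨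
        a = (⟨y, hy⟩ : {u : V | u ≠ v})))) = p11 (w'.filter (two x y)) := by
      rw [pattern11Count_eq, hfil, p11_map _ Subtype.val_injective]
    rw [hL] at hiff
    rw [hiff, hrw, Nat.le_zero]
  set π : List V := firsts w' with hπdef
  have hπmem : ∀ x : V, x ≠ v → x ∈ π := fun x hx => (mem_firsts _ _).mpr (hmem' x hx)
  have hπv : v ∉ π := fun hc => hvw' ((mem_firsts _ _).mp hc)
  have hπsub : ∀ c : V, c ∈ π → c ≠ v :=
    fun c hc hcv => hπv (hcv ▸ hc)
  have hπcount : ∀ x : V, x ≠ v → π.count x = 1 :=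
    fun x hx => count_firsts _ _ (hmem' x hx)
  set pb : V → Bool := fun c => decide (G.Adj v c) with hpbdef
  set A : List V := π.filter pb with hAdef
  set B : List V := π.filter (fun c => !pb c) with hBdef
  -- helper filter computations, used in both branches
  have hAB_single : ∀ x y : V, x ≠ v → y ≠ v → x ≠ y → pb x = true → pb y = false →
      A.filter (two x y) = [x] ∧ B.filter (two x y) = [y] := by
    intro x y hxv hyv hxy hbx hby
    constructor
    · rw [hAdef, List.filter_filter]
      apply filter_eq_single _ _ _ (hπcount x hxv)
      intro c hc
      constructor
      · intro hcc
        rcases Bool.and_eq_true_iff.mp hcc with ⟨h2, h1⟩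
        rcases (by simpa [two] using h2 : c = x ∨ c = y) with rfl | rfl
        · rfl
        · rw [hby] at h1; exact absurd h1 (by simp)
      · rintro rfl
        simp [two, hbx]
    · rw [hBdef, List.filter_filter]
      apply filter_eq_single _ _ _ (hπcount y hyv)
      intro c hc
      constructor
      · intro hcc
        rcases Bool.and_eq_true_iff.mp hcc with ⟨h2, h1⟩
        rcases (by simpa [two] using h2 : c = x ∨ c = y) with rfl | rfl
        · rw [hbx] at h1; exact absurd h1 (by simp)
        · rfl
      · rintro rfl
        simp [two, hby]
  have hAB_both : ∀ x y : V, x ≠ v → y ≠ v → (pb x = true → pb y = true →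
      A.filter (two x y) = π.filter (two x y) ∧ B.filter (two x y) = []) ∧
      (pb x = false → pb y = false →
      A.filter (two x y) = [] ∧ B.filter (two x y) = π.filter (two x y)) := by
    intro x y hxv hyv
    constructor
    · intro hbx hby
      constructor
      · rw [hAdef, List.filter_filter]
        apply List.filter_congr
        intro c hc
        by_cases h2 : two x y c = true
        · rcases (by simpa [two] using h2 : c = x ∨ c = y) with rfl | rfl
          · simp [two] at h2 ⊢; simp [hbx]
          · simp [two] at h2 ⊢; simp [hby]
        · simp only [Bool.not_eq_true] at h2
          simp [h2]
      · rw [hBdef, List.filter_filter, List.filter_eq_nil_iff]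
        intro c hc hcc
        rcases Bool.and_eq_true_iff.mp hcc with ⟨h2, h1⟩
        rcases (by simpa [two] using h2 : c = x ∨ c = y) with rfl | rfl
        · rw [hbx] at h1; exact absurd h1 (by simp)
        · rw [hby] at h1; exact absurd h1 (by simp)
    · intro hbx hby
      constructor
      · rw [hAdef, List.filter_filter, List.filter_eq_nil_iff]
        intro c hc hcc
        rcases Bool.and_eq_true_iff.mp hcc with ⟨h2, h1⟩
        rcases (by simpa [two] using h2 : c = x ∨ c = y) with rfl | rfl
        · rw [hbx] at h1; simp at h1
        · rw [hby] at h1; simp at h1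
      · rw [hBdef, List.filter_filter]
        apply List.filter_congr
        intro c hc
        by_cases h2 : two x y c = true
        · rcases (by simpa [two] using h2 : c = x ∨ c = y) with rfl | rfl
          · simp [two] at h2 ⊢; simp [hbx]
          · simp [two] at h2 ⊢; simp [hby]
        · simp only [Bool.not_eq_true] at h2
          simp [h2]
  -- v-pair filter helpers
  have hwfil_v : ∀ x : V, x ≠ v → w'.filter (two x v) = List.replicate k x := by
    intro x hxv
    have hcg : w'.filter (two x v) = w'.filter (· = x) := by
      apply List.filter_congr
      intro c hc
      have hcv : c ≠ v := fun hh => hvw' (hh ▸ hc)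
      show (decide (c = x ∨ c = v)) = decide (c = x)
      apply decide_eq_decide.mpr
      constructor
      · rintro (rfl | rfl)
        · rfl
        · exact absurd rfl hcv
      · exact fun h => Or.inl h
    rw [hcg, List.filter_eq, hcnt' x hxv]
  have hπfil_v : ∀ x : V, x ≠ v → π.filter (two x v) = [x] := by
    intro x hxv
    apply filter_eq_single _ _ _ (hπcount x hxv)
    intro c hc
    have hcv := hπsub c hc
    constructor
    · intro h2
      rcases (by simpa [two] using h2 : c = x ∨ c = v) with rfl | rfl
      · rfl
      · exact absurd rfl hcv
    · rintro rfl; simp [two]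
  have hA_v : ∀ x : V, x ≠ v → pb x = true →
      A.filter (two x v) = [x] ∧ B.filter (two x v) = [] := by
    intro x hxv hbx
    constructor
    · rw [hAdef, List.filter_filter]
      apply filter_eq_single _ _ _ (hπcount x hxv)
      intro c hc
      have hcv := hπsub c hc
      constructor
      · intro hcc
        rcases Bool.and_eq_true_iff.mp hcc with ⟨h2, h1⟩
        rcases (by simpa [two] using h2 : c = x ∨ c = v) with rfl | rfl
        · rfl
        · exact absurd rfl hcv
      · rintro rfl
        simp [two, hbx]
    · rw [hBdef, List.filter_filter, List.filter_eq_nil_iff]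
      intro c hc hcc
      rcases Bool.and_eq_true_iff.mp hcc with ⟨h2, h1⟩
      rcases (by simpa [two] using h2 : c = x ∨ c = v) with rfl | rfl
      · rw [hbx] at h1; exact absurd h1 (by simp)
      · exact absurd rfl (hπsub _ hc)
  have hB_v : ∀ x : V, x ≠ v → pb x = false →
      A.filter (two x v) = [] ∧ B.filter (two x v) = [x] := by
    intro x hxv hbx
    constructor
    · rw [hAdef, List.filter_filter, List.filter_eq_nil_iff]
      intro c hc hcc
      rcases Bool.and_eq_true_iff.mp hcc with ⟨h2, h1⟩
      rcases (by simpa [two] using h2 : c = x ∨ c = v) with rfl | rfl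
      · rw [hbx] at h1; exact absurd h1 (by simp)
      · exact absurd rfl (hπsub _ hc)
    · rw [hBdef, List.filter_filter]
      apply filter_eq_single _ _ _ (hπcount x hxv)
      intro c hc
      have hcv := hπsub c hc
      constructor
      · intro hcc
        rcases Bool.and_eq_true_iff.mp hcc with ⟨h2, h1⟩
        rcases (by simpa [two] using h2 : c = x ∨ c = v) with rfl | rfl
        · rfl
        · exact absurd rfl hcv
      · rintro rfl
        simp [two, hbx]
  have hvsingle : ∀ x : V, x ≠ v → ([v] : List V).filter (two x v) = [v] := by
    intro x hxv
    rw [List.filter_cons, if_pos (two_self_right x v)]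
    rfl
  rcases Nat.lt_or_ge k 2 with hklt | hk2
  · -- k = 1 : the graph G.induce is complete
    have hk1 : k = 1 := by omega
    subst hk1
    refine ⟨B ++ (A ++ (B ++ [v])), ?_, ?_⟩
    · intro t
      by_cases htv : t = v
      · subst htv; simp
      · have htπ : t ∈ π := hπmem t htv
        by_cases hbt : pb t
        · have : t ∈ A := by rw [hAdef, List.mem_filter]; exact ⟨htπ, hbt⟩
          simp [this]
        · have : t ∈ B := by
            rw [hBdef, List.mem_filter]
            refine ⟨htπ, ?_⟩
            simp only [Bool.not_eq_true] at hbt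
            simp [hbt]
          simp [this]
    · intro x y hxy
      rw [pattern11Count_eq]
      show G.Adj x y ↔ p11 (List.filter (two x y) (B ++ (A ++ (B ++ [v])))) ≤ 1 - 1
      have hw'nodup : w'.Nodup := by
        rw [List.nodup_iff_count_le_one]
        intro a
        by_cases hav : a = v
        · subst hav
          rw [List.count_eq_zero_of_not_mem hvw']
          omega
        · rw [hcnt' a hav]
      have hvpair1 : ∀ x : V, x ≠ v →
          (G.Adj v x ↔ p11 ((B ++ (A ++ (B ++ [v]))).filter (two x v)) ≤ 1 - 1) := by
        intro x hxv
        by_cases hbx : pb x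
        · obtain ⟨hA1, hB1⟩ := hA_v x hxv hbx
          have hfin : (B ++ (A ++ (B ++ [v]))).filter (two x v) = [x, v] := by
            simp only [List.filter_append]
            rw [hA1, hB1, hvsingle x hxv]
            rfl
          rw [hfin]
          refine iff_of_true ?_ (by norm_num [p11_cons_cons, hxv])
          have : decide (G.Adj v x) = true := hbx
          exact of_decide_eq_true this
        · simp only [Bool.not_eq_true] at hbx
          obtain ⟨hA1, hB1⟩ := hB_v x hxv hbx
          have hfin : (B ++ (A ++ (B ++ [v]))).filter (two x v) = [x, x, v] := by
            simp only [List.filter_append]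
            rw [hA1, hB1, hvsingle x hxv]
            rfl
          rw [hfin]
          refine iff_of_false ?_ ?_
          · have : decide (G.Adj v x) = false := hbx
            exact of_decide_eq_false this
          · rw [p11_cons_cons, if_pos rfl, p11_cons_cons, if_neg hxv]
            omega
      by_cases hxv : x = v
      · have hyv : y ≠ v := fun hh => hxy (hxv ▸ hh.symm ▸ rfl)
        rw [hxv, two_comm v y]
        exact hvpair1 y hyv
      · by_cases hyv : y = v
        · rw [hyv, G.adj_comm]
          exact hvpair1 x hxv
        · -- pair of non-v vertices : complete, count 0
          have hAdjxy : G.Adj x y := by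
            rw [hadj' x y hxv hyv hxy]
            exact p11_eq_zero_of_nodup _ (hw'nodup.filter _)
          obtain ⟨a, b, hab0, hπfil, hWhead⟩ := key w' x y hxy (hmem' x hxv) (hmem' y hyv)
          rw [← hπdef] at hπfil
          have hxyv : ∀ c : V, (c = x ∨ c = y) → c ≠ v := by
            rintro c (rfl | rfl)
            · exact hxv
            · exact hyv
          have hab : a ≠ b := by
            rcases hab0 with ⟨rfl, rfl⟩ | ⟨rfl, rfl⟩
            · exact hxy
            · exact fun hh => hxy hh.symm
          have hvnil : ([v] : List V).filter (two x y) = [] := by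
            rw [List.filter_cons, if_neg, List.filter_nil]
            simp only [two, decide_eq_true_eq]
            rintro (rfl | rfl)
            · exact hxv rfl
            · exact hyv rfl
          refine iff_of_true hAdjxy ?_
          by_cases hbx : pb x <;> by_cases hby : pb y
          · obtain ⟨hA1, hB1⟩ := (hAB_both x y hxv hyv).1 hbx hby
            have hfin : (B ++ (A ++ (B ++ [v]))).filter (two x y) = [a, b] := by
              simp only [List.filter_append]
              rw [hA1, hB1, hπfil, hvnil]
              rfl
            rw [hfin]
            simp [p11_cons_cons, hab]
          · simp only [Bool.not_eq_true] at hby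
            obtain ⟨hA1, hB1⟩ := hAB_single x y hxv hyv hxy hbx hby
            have hfin : (B ++ (A ++ (B ++ [v]))).filter (two x y) = [y, x, y] := by
              simp only [List.filter_append]
              rw [hA1, hB1, hvnil]
              rfl
            rw [hfin]
            simp [p11_cons_cons, hxy, Ne.symm hxy]
          · simp only [Bool.not_eq_true] at hbx
            obtain ⟨hA1, hB1⟩ := hAB_single y x hyv hxv (Ne.symm hxy) hby hbx
            rw [two_comm y x] at hA1 hB1
            have hfin : (B ++ (A ++ (B ++ [v]))).filter (two x y) = [x, y, x] := by
              simp only [List.filter_append]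
              rw [hA1, hB1, hvnil]
              rfl
            rw [hfin]
            simp [p11_cons_cons, hxy, Ne.symm hxy]
          · simp only [Bool.not_eq_true] at hbx hby
            obtain ⟨hA1, hB1⟩ := (hAB_both x y hxv hyv).2 hbx hby
            have hfin : (B ++ (A ++ (B ++ [v]))).filter (two x y) = [a, b, a, b] := by
              simp only [List.filter_append]
              rw [hA1, hB1, hπfil, hvnil]
              rfl
            rw [hfin]
            simp [p11_cons_cons, hab, Ne.symm hab]
  · -- k ≥ 2
    obtain ⟨m, hm⟩ : ∃ m, k - 1 = m + 1 := ⟨k - 2, by omega⟩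
    set u : List V := Zb v (k-1) π.reverse ++ (A ++ ([v] ++ (B ++ w'))) with hudef
    have humem : ∀ t : V, t ∈ u := by
      intro t
      by_cases htv : t = v
      · subst htv; rw [hudef]; simp
      · have := hmem' t htv
        rw [hudef]; simp [this]
    have hvpair : ∀ x : V, x ≠ v →
        (G.Adj v x ↔ p11 (u.filter (two x v)) ≤ k - 1) := by
      intro x hxv
      have hzone : (Zb v (k-1) π.reverse).filter (two x v) = Fw x v (k-1) := by
        apply Zb_filter_single v _ (two_self_right x v)
        rw [List.filter_reverse, hπfil_v x hxv]
        rfl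
      have hrephead : (List.replicate k x).head? = some x := by
        rw [List.head?_replicate, if_neg (by omega)]
      by_cases hbx : pb x
      · obtain ⟨hA1, hB1⟩ := hA_v x hxv hbx
        have hfin : u.filter (two x v) =
            Fw x v (k-1) ++ (x :: v :: List.replicate k x) := by
          rw [hudef]
          simp only [List.filter_append]
          rw [hzone, hA1, hB1, hwfil_v x hxv, hvsingle x hxv]
          simp
        have hcount : p11 (u.filter (two x v)) = k - 1 := by
          rw [hfin, Fp11_of_head_ne (k-1) x v hxv _ (by simp [hxv])]
          rw [p11_cons_cons, if_neg hxv, p11_cons, hrephead,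
            if_neg (by simpa using fun hh : x = v => hxv hh), p11_replicate]
          omega
        rw [hcount]
        exact iff_of_true (of_decide_eq_true hbx) le_rfl
      · simp only [Bool.not_eq_true] at hbx
        obtain ⟨hA1, hB1⟩ := hB_v x hxv hbx
        have hfin : u.filter (two x v) =
            Fw x v (k-1) ++ (v :: List.replicate (k+1) x) := by
          rw [hudef]
          simp only [List.filter_append]
          rw [hzone, hA1, hB1, hwfil_v x hxv, hvsingle x hxv]
          simp [List.replicate_succ]
        have hcount : p11 (u.filter (two x v)) = k + 1 := by
          rw [hfin, hm, Fp11_vv m x v hxv _ (by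
            rw [List.head?_replicate, if_neg (by omega)]
            simpa using fun hh : x = v => hxv hh)]
          rw [p11_replicate]
          omega
        rw [hcount]
        exact iff_of_false (of_decide_eq_false hbx) (by omega)
    have key2 : ∀ a b : V, a ≠ v → b ≠ v → a ≠ b →
        π.filter (two a b) = [a, b] →
        (w'.filter (two a b)).head? = some a →
        (G.Adj a b ↔ p11 (u.filter (two a b)) ≤ k - 1) := by
      intro a b hav hbv hab hπf hWh
      have hv2 : two a b v = false := by
        simp only [two, decide_eq_false_iff_not]
        rintro (rfl | rfl)
        · exact hav rfl
        · exact hbv rfl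
      have hzone : (Zb v (k-1) π.reverse).filter (two a b) = Dw (k-1) b a := by
        apply Zb_filter_pair v _ hv2
        rw [List.filter_reverse, hπf]
        rfl
      have hvnil : ([v] : List V).filter (two a b) = [] := by
        rw [List.filter_cons, if_neg (by simp [hv2]), List.filter_nil]
      have hcount1 : p11 (Dw (k-1) b a ++ (a :: b :: w'.filter (two a b)))
          = (k - 1) + p11 (w'.filter (two a b)) := by
        rw [hm, Dp11 m b a (fun hh => hab hh.symm), List.head?_cons, if_pos rfl]
        rw [p11_cons_cons, if_neg hab, p11_cons, hWh,
          if_neg (by simpa using fun hh : a = b => hab hh)]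
        omega
      have hcount2 : p11 (Dw (k-1) b a ++ (b :: a :: w'.filter (two a b)))
          = (k - 1) + p11 (w'.filter (two a b)) := by
        rw [hm, Dp11 m b a (fun hh => hab hh.symm), List.head?_cons,
          if_neg (by simpa using fun hh : b = a => hab hh.symm)]
        rw [p11_cons_cons, if_neg (fun hh => hab hh.symm), p11_cons, hWh, if_pos rfl]
        omega
      rw [hadj' a b hav hbv hab]
      by_cases hba : pb a <;> by_cases hbb : pb b
      · obtain ⟨hA1, hB1⟩ := (hAB_both a b hav hbv).1 hba hbb
        have hfin : u.filter (two a b) = Dw (k-1) b a ++ (a :: b :: w'.filter (two a b)) := by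
          rw [hudef]
          simp only [List.filter_append]
          rw [hzone, hA1, hB1, hπf, hvnil]
          simp
        rw [hfin, hcount1]
        omega
      · simp only [Bool.not_eq_true] at hbb
        obtain ⟨hA1, hB1⟩ := hAB_single a b hav hbv hab hba hbb
        have hfin : u.filter (two a b) = Dw (k-1) b a ++ (a :: b :: w'.filter (two a b)) := by
          rw [hudef]
          simp only [List.filter_append]
          rw [hzone, hA1, hB1, hvnil]
          simp
        rw [hfin, hcount1]
        omega
      · simp only [Bool.not_eq_true] at hba
        obtain ⟨hA1, hB1⟩ := hAB_single b a hbv hav (fun hh => hab hh.symm) hbb hba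
        rw [two_comm b a] at hA1 hB1
        have hfin : u.filter (two a b) = Dw (k-1) b a ++ (b :: a :: w'.filter (two a b)) := by
          rw [hudef]
          simp only [List.filter_append]
          rw [hzone, hA1, hB1, hvnil]
          simp
        rw [hfin, hcount2]
        omega
      · simp only [Bool.not_eq_true] at hba hbb
        obtain ⟨hA1, hB1⟩ := (hAB_both a b hav hbv).2 hba hbb
        have hfin : u.filter (two a b) = Dw (k-1) b a ++ (a :: b :: w'.filter (two a b)) := by
          rw [hudef]
          simp only [List.filter_append]
          rw [hzone, hA1, hB1, hπf, hvnil]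
          simp
        rw [hfin, hcount1]
        omega
    refine ⟨u, humem, ?_⟩
    intro x y hxy
    rw [pattern11Count_eq]
    show G.Adj x y ↔ p11 (List.filter (two x y) u) ≤ k - 1
    by_cases hxv : x = v
    · have hyv : y ≠ v := fun hh => hxy (hxv ▸ hh.symm ▸ rfl)
      rw [hxv, two_comm v y]
      exact hvpair y hyv
    · by_cases hyv : y = v
      · rw [hyv, G.adj_comm]
        exact hvpair x hxv
      · obtain ⟨a, b, hab0, hπfil, hWhead⟩ := key w' x y hxy (hmem' x hxv) (hmem' y hyv)
        rw [← hπdef] at hπfil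
        rcases hab0 with ⟨rfl, rfl⟩ | ⟨rfl, rfl⟩
        · exact key2 a b hxv hyv hxy hπfil hWhead
        · rw [G.adj_comm, two_comm b a]
          rw [two_comm b a] at hπfil hWhead
          exact key2 a b hyv hxv (fun hh => hxy hh.symm) hπfil hWhead
end

section
/- A simple graph is an interval graph if and only if it is 2-uniformly 1-11-representable, i.e., if and only if it has a 1-11-representant in which every vertex occurs exactly twice. -/
/-- `G` is an interval graph: each vertex gets a nonempty closed real interval such that
distinct vertices are adjacent iff their intervals intersect. -/
def IsIntervalGraph {V : Type*} (G : SimpleGraph V) : Prop :=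
  ∃ I : V → Set ℝ,
    (∀ v : V, ∃ a b : ℝ, a ≤ b ∧ I v = Set.Icc a b) ∧
    ∀ u v : V, u ≠ v → (G.Adj u v ↔ (I u ∩ I v).Nonempty)


section Aux

variable {V : Type*} [DecidableEq V]

private lemma patt4 (a b c d : V) :
    pattern11Count [a,b,c,d] =
      (if a = b then 1 else 0) + ((if b = c then 1 else 0) + if c = d then 1 else 0) := by
  simp [pattern11Count, List.countP_cons]
  split <;> split <;> split <;> omega

private lemma len_count (x y : V) (hxy : x ≠ y) : ∀ u : List V, (∀ a ∈ u, a = x ∨ a = y) →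
    u.length = u.count x + u.count y
  | [], _ => by simp
  | a :: t, hm => by
    have ht := len_count x y hxy t (fun b hb => hm b (List.mem_cons_of_mem _ hb))
    rcases hm a (List.mem_cons_self) with h | h <;> subst h <;>
      simp [List.count_cons, hxy, hxy.symm, ht] <;> omega

private lemma classify (x y : V) (u : List V) (hxy : x ≠ y)
    (hmem : ∀ a ∈ u, a = x ∨ a = y) (hcx : u.count x = 2) (hcy : u.count y = 2) :
    u = [x,x,y,y] ∨ u = [x,y,x,y] ∨ u = [x,y,y,x] ∨ u = [y,x,x,y] ∨ u = [y,x,y,x] ∨ u = [y,y,x,x] := by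
  have hlen : u.length = 4 := by rw [len_count x y hxy u hmem, hcx, hcy]
  match u, hlen with
  | [a,b,c,d], _ =>
    rcases hmem a (by simp) with h|h <;> rcases hmem b (by simp) with h1|h1 <;>
      rcases hmem c (by simp) with h2|h2 <;> rcases hmem d (by simp) with h3|h3 <;>
      subst h <;> subst h1 <;> subst h2 <;> subst h3 <;>
      simp_all [List.count_cons, hxy, hxy.symm]

private lemma patt_le_one_iff (w : List V) (x y : V) (hxy : x ≠ y)
    (hcx : w.count x = 2) (hcy : w.count y = 2) :
    pattern11Count (w.filter (fun a => decide (a = x ∨ a = y))) ≤ 1 ↔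
      w.filter (fun a => decide (a = x ∨ a = y)) ≠ [x,x,y,y] ∧
      w.filter (fun a => decide (a = x ∨ a = y)) ≠ [y,y,x,x] := by
  set p : V → Bool := fun a => decide (a = x ∨ a = y) with hp
  have hcx2 : (w.filter p).count x = 2 := by rw [List.count_filter (by simp [hp])]; exact hcx
  have hcy2 : (w.filter p).count y = 2 := by rw [List.count_filter (by simp [hp])]; exact hcy
  have hmem : ∀ a ∈ w.filter p, a = x ∨ a = y := by
    intro a ha; simpa [hp] using (List.mem_filter.mp ha).2
  rcases classify x y (w.filter p) hxy hmem hcx2 hcy2 with h | h | h | h | h | h <;>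
    rw [h] <;> rw [patt4] <;> simp [hxy, hxy.symm]

private lemma filter_swap (w : List V) (x y : V) :
    w.filter (fun a => decide (a = x ∨ a = y)) = w.filter (fun a => decide (a = y ∨ a = x)) :=
  List.filter_congr (fun a _ => by simp [or_comm])

private lemma filter_eq_append_split (p : V → Bool) :
    ∀ (l l1 l2 : List V), l.filter p = l1 ++ l2 →
      ∃ s t, l = s ++ t ∧ s.filter p = l1 ∧ t.filter p = l2 := by
  intro l
  induction l with
  | nil => intro l1 l2 h
           simp only [List.filter_nil] at h
           rcases List.append_eq_nil_iff.mp h.symm with ⟨rfl, rfl⟩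
           exact ⟨[], [], by simp⟩
  | cons a l ih =>
    intro l1 l2 h
    by_cases hp : p a
    · rw [List.filter_cons_of_pos hp] at h
      match l1, h with
      | [], h => exact ⟨[], a :: l, by simp [List.filter_cons_of_pos hp, h]⟩
      | b :: l1, h =>
        simp only [List.cons_append, List.cons.injEq] at h
        obtain ⟨rfl, h2⟩ := h
        obtain ⟨s, t, rfl, hs, ht⟩ := ih l1 l2 h2
        exact ⟨a :: s, t, by simp [List.filter_cons_of_pos hp, hs, ht]⟩
    · rw [List.filter_cons_of_neg (by simpa using hp)] at h
      obtain ⟨s, t, rfl, hs, ht⟩ := ih l1 l2 h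
      exact ⟨a :: s, t, by simp [List.filter_cons_of_neg (by simpa using hp), hs, ht]⟩

/-- `Before w x y` : all occurrences of `x` precede all occurrences of `y`. -/
private def Before (w : List V) (x y : V) : Prop :=
  ∃ w1 w2 : List V, w = w1 ++ w2 ∧ y ∉ w1 ∧ x ∉ w2

private lemma filter_eq_xxyy_iff_before (w : List V) (x y : V) (hxy : x ≠ y)
    (hcx : w.count x = 2) (hcy : w.count y = 2) :
    w.filter (fun a => decide (a = x ∨ a = y)) = [x, x, y, y] ↔ Before w x y := by
  set p : V → Bool := fun a => decide (a = x ∨ a = y) with hp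
  constructor
  · intro h
    obtain ⟨s, t, rfl, hs, ht⟩ := filter_eq_append_split p _ [x, x] [y, y] h
    refine ⟨s, t, rfl, fun hy => ?_, fun hx => ?_⟩
    · have : y ∈ s.filter p := List.mem_filter.mpr ⟨hy, by simp [hp]⟩
      rw [hs] at this; simp at this; exact hxy this.symm
    · have : x ∈ t.filter p := List.mem_filter.mpr ⟨hx, by simp [hp]⟩
      rw [ht] at this; simp at this; exact hxy this
  · rintro ⟨w1, w2, rfl, hy1, hx2⟩
    have hcx1 : w1.count x = 2 := by
      rw [List.count_append, List.count_eq_zero.mpr hx2] at hcx; simpa using hcx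
    have hcy2 : w2.count y = 2 := by
      rw [List.count_append, List.count_eq_zero.mpr hy1] at hcy; simpa using hcy
    rw [List.filter_append]
    have h1 : w1.filter p = [x, x] := by
      have hall : ∀ a ∈ w1.filter p, a = x := by
        intro a ha
        have := List.mem_filter.mp ha
        rcases (by simpa [hp] using this.2 : a = x ∨ a = y) with rfl | rfl
        · rfl
        · exact absurd this.1 hy1
      have hlen : (w1.filter p).length = 2 := by
        have : (w1.filter p).count x = 2 := by
          rw [List.count_filter (by simp [hp])]; exact hcx1
        rw [← this]
        exact (List.count_eq_length.mpr (fun b hb => (hall b hb).symm)).symm ▸ rfl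
      match (w1.filter p), hlen, hall with
      | [a, b], _, hall => rw [hall a (by simp), hall b (by simp)]
    have h2 : w2.filter p = [y, y] := by
      have hall : ∀ a ∈ w2.filter p, a = y := by
        intro a ha
        have := List.mem_filter.mp ha
        rcases (by simpa [hp] using this.2 : a = x ∨ a = y) with rfl | rfl
        · exact absurd this.1 hx2
        · rfl
      have hlen : (w2.filter p).length = 2 := by
        have : (w2.filter p).count y = 2 := by
          rw [List.count_filter (by simp [hp])]; exact hcy2
        rw [← this]
        exact (List.count_eq_length.mpr (fun b hb => (hall b hb).symm)).symm ▸ rfl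
      match (w2.filter p), hlen, hall with
      | [a, b], _, hall => rw [hall a (by simp), hall b (by simp)]
    rw [h1, h2]; rfl

private lemma not_mem_take_indexOf (a : V) : ∀ l : List V, a ∉ l.take (l.idxOf a)
  | [] => by simp
  | b :: l => by
    by_cases h : b = a
    · simp [List.idxOf_cons_eq _ h]
    · rw [List.idxOf_cons_ne _ h, List.take_succ_cons]
      simp only [List.mem_cons]
      rintro (rfl | hm)
      · exact h rfl
      · exact not_mem_take_indexOf a l hm

private lemma indexOf_lt_of_mem_take {a : V} : ∀ {n : ℕ} {l : List V}, a ∈ l.take n → l.idxOf a < n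
  | 0, l, h => by simp at h
  | n + 1, [], h => by simp at h
  | n + 1, b :: l, h => by
    by_cases hb : b = a
    · rw [List.idxOf_cons_eq _ hb]; omega
    · rw [List.take_succ_cons, List.mem_cons] at h
      rcases h with rfl | h
      · exact absurd rfl hb
      · rw [List.idxOf_cons_ne _ hb]
        exact Nat.succ_lt_succ (indexOf_lt_of_mem_take h)

/-- index of first occurrence -/
private def fstIdx (w : List V) (v : V) : ℕ := w.idxOf v
/-- index of last occurrence -/
private def sndIdx (w : List V) (v : V) : ℕ := w.length - 1 - w.reverse.idxOf v

private lemma before_iff_sndIdx_lt_fstIdx (w : List V) (x y : V) (hx : x ∈ w) (hy : y ∈ w) :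
    Before w x y ↔ sndIdx w x < fstIdx w y := by
  constructor
  · rintro ⟨w1, w2, rfl, hy1, hx2⟩
    have hx1 : x ∈ w1 := by rcases List.mem_append.mp hx with h | h; exact h; exact absurd h hx2
    have h1 : fstIdx (w1 ++ w2) y = w1.length + w2.idxOf y := by
      unfold fstIdx; exact List.idxOf_append_of_notMem hy1
    have h2 : (w1 ++ w2).reverse.idxOf x = w2.length + w1.reverse.idxOf x := by
      rw [List.reverse_append]
      exact (List.idxOf_append_of_notMem (by simpa using hx2)).trans (by simp)
    have h3 : w1.reverse.idxOf x < w1.length := by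
      have := List.idxOf_lt_length_iff.mpr (show x ∈ w1.reverse by simpa using hx1)
      simpa using this
    unfold sndIdx
    rw [h2, h1]
    simp only [List.length_append]
    omega
  · intro h
    refine ⟨w.take (fstIdx w y), w.drop (fstIdx w y), (List.take_append_drop _ _).symm,
      not_mem_take_indexOf y w, fun hxd => ?_⟩
    have hlen : fstIdx w y < w.length := List.idxOf_lt_length_iff.mpr hy
    have hmt : x ∈ w.reverse.take (w.length - fstIdx w y) := by
      have : x ∈ (w.drop (fstIdx w y)).reverse := by simpa using hxd
      rwa [List.reverse_drop] at this
    have h2 : w.reverse.idxOf x < w.length - fstIdx w y := indexOf_lt_of_mem_take hmt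
    unfold sndIdx at h
    omega

private lemma fstIdx_le_sndIdx (w : List V) (v : V) (hv : v ∈ w) : fstIdx w v ≤ sndIdx w v := by
  by_contra h
  obtain ⟨w1, w2, hw, h1, h2⟩ := (before_iff_sndIdx_lt_fstIdx w v v hv hv).mpr (by omega)
  rw [hw] at hv
  rcases List.mem_append.mp hv with h3 | h3 <;> [exact h1 h3; exact h2 h3]

private def eVal (a b : V → ℝ) (e : V × Bool) : ℝ := if e.2 then b e.1 else a e.1
private def eTag {V : Type*} (e : V × Bool) : ℕ := if e.2 then 1 else 0
private def evRel (a b : V → ℝ) : (V × Bool) → (V × Bool) → Prop :=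
  fun e f => eVal a b e < eVal a b f ∨ (eVal a b e = eVal a b f ∧ eTag e ≤ eTag f)

private lemma evRel_total (a b : V → ℝ) : ∀ e f, evRel a b e f ∨ evRel a b f e := by
  intro e f
  rcases lt_trichotomy (eVal a b e) (eVal a b f) with h | h | h
  · exact Or.inl (Or.inl h)
  · rcases Nat.le_total (eTag e) (eTag f) with h1 | h1
    · exact Or.inl (Or.inr ⟨h, h1⟩)
    · exact Or.inr (Or.inr ⟨h.symm, h1⟩)
  · exact Or.inr (Or.inl h)

private lemma evRel_trans (a b : V → ℝ) : ∀ e f g, evRel a b e f → evRel a b f g → evRel a b e g := by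
  rintro e f g (h | ⟨h, h1⟩) (h2 | ⟨h2, h3⟩)
  · exact Or.inl (h.trans h2)
  · exact Or.inl (h.trans_eq h2)
  · exact Or.inl (h.trans_lt h2)
  · exact Or.inr ⟨h.trans h2, h1.trans h3⟩

private lemma ev_bad (a b : V → ℝ) (hab : ∀ v, a v ≤ b v) (x y : V) (hlt : b x < a y)
    (t s : Bool) : ¬ evRel a b (y, t) (x, s) := by
  intro hr
  have h1 : a y ≤ eVal a b (y, t) := by cases t <;> simp [eVal, hab y]
  have h2 : eVal a b (x, s) ≤ b x := by cases s <;> simp [eVal, hab x]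
  rcases hr with h | ⟨h, -⟩ <;> linarith

private lemma ev_good (a b : V → ℝ) (x y : V) (hr : evRel a b (x, true) (y, false)) : b x < a y := by
  rcases hr with h | ⟨-, ht⟩
  · simpa [eVal] using h
  · simp [eTag] at ht

private lemma keylemma (a b : V → ℝ) (hab : ∀ v, a v ≤ b v) (es : List (V × Bool))
    (hsorted : es.Pairwise (evRel a b)) (hnodup : es.Nodup) (x y : V) (hxy : x ≠ y)
    (hcx : (es.map Prod.fst).count x = 2) (hcy : (es.map Prod.fst).count y = 2) :
    (es.map Prod.fst).filter (fun a => decide (a = x ∨ a = y)) = [x, x, y, y] ↔ b x < a y := by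
  set p : V → Bool := fun a => decide (a = x ∨ a = y) with hp
  set fes := es.filter (fun e => p e.1) with hfes
  clear_value fes
  have hfu : (es.map Prod.fst).filter p = fes.map Prod.fst := by
    rw [hfes, List.filter_map]; rfl
  have hpair : fes.Pairwise (evRel a b) := hfes ▸ hsorted.sublist List.filter_sublist
  have hnd : fes.Nodup := hfes ▸ hnodup.sublist List.filter_sublist
  have hcx2 : (fes.map Prod.fst).count x = 2 := by
    rw [← hfu, List.count_filter (by simp [hp])]; exact hcx
  have hcy2 : (fes.map Prod.fst).count y = 2 := by
    rw [← hfu, List.count_filter (by simp [hp])]; exact hcy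
  have hmem : ∀ c ∈ fes.map Prod.fst, c = x ∨ c = y := by
    intro c hc
    have : c ∈ (es.map Prod.fst).filter p := by rw [hfu]; exact hc
    simpa [hp] using (List.mem_filter.mp this).2
  have hlen : fes.length = 4 := by
    have := len_count x y hxy (fes.map Prod.fst) hmem
    rw [hcx2, hcy2] at this; simpa using this
  rw [hfu]
  obtain ⟨e1, e2, e3, e4, rfl⟩ : ∃ e1 e2 e3 e4, fes = [e1, e2, e3, e4] := by
    match fes, hlen with
    | [f1, f2, f3, f4], _ => exact ⟨f1, f2, f3, f4, rfl⟩
  rw [List.pairwise_cons, List.pairwise_cons, List.pairwise_cons] at hpair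
  obtain ⟨h1s, h2s, h3s, -⟩ := hpair
  have h12 := h1s e2 (by simp); have h13 := h1s e3 (by simp); have h14 := h1s e4 (by simp)
  have h23 := h2s e3 (by simp); have h24 := h2s e4 (by simp)
  have h34 := h3s e4 (by simp)
  constructor
  · intro hmap
    rcases e1 with ⟨u1, t1⟩; rcases e2 with ⟨u2, t2⟩; rcases e3 with ⟨u3, t3⟩; rcases e4 with ⟨u4, t4⟩
    simp only [List.map_cons, List.map_nil, List.cons.injEq, and_true] at hmap
    obtain ⟨hu1, hu2, hu3, hu4⟩ := hmap
    have ht12 : t1 ≠ t2 := by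
      intro h; rw [hu1, ← hu2, h] at hnd; simp at hnd
    have ht34 : t3 ≠ t4 := by
      intro h; rw [hu3, ← hu4, h] at hnd; simp at hnd
    cases t1 <;> cases t2 <;> cases t3 <;> cases t4 <;>
      first
        | exact absurd rfl ht12
        | exact absurd rfl ht34
        | (rw [hu1, hu3] at h13; exact ev_good a b x y h13)
        | (rw [hu1, hu4] at h14; exact ev_good a b x y h14)
        | (rw [hu2, hu3] at h23; exact ev_good a b x y h23)
        | (rw [hu2, hu4] at h24; exact ev_good a b x y h24)
  · intro hlt
    rcases classify x y (List.map Prod.fst [e1,e2,e3,e4]) hxy hmem hcx2 hcy2 with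
      h | h | h | h | h | h
    · exact h
    all_goals {
      exfalso
      rcases e1 with ⟨u1, t1⟩; rcases e2 with ⟨u2, t2⟩
      rcases e3 with ⟨u3, t3⟩; rcases e4 with ⟨u4, t4⟩
      simp only [List.map_cons, List.map_nil, List.cons.injEq, and_true] at h
      obtain ⟨hu1, hu2, hu3, hu4⟩ := h
      first
        | (rw [hu2, hu3] at h23; exact ev_bad a b hab x y hlt _ _ h23)
        | (rw [hu2, hu4] at h24; exact ev_bad a b hab x y hlt _ _ h24)
        | (rw [hu1, hu2] at h12; exact ev_bad a b hab x y hlt _ _ h12)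
        | (rw [hu1, hu3] at h13; exact ev_bad a b hab x y hlt _ _ h13)
    }

end Aux

/-- a graph is an interval graph iff it is 2-uniformly
1-11-representable. -/
theorem intervalGraph_iff_two_uniform_one_eleven {V : Type*} [DecidableEq V] [Fintype V]
    (G : SimpleGraph V) :
    IsIntervalGraph G ↔ UniformK11Rep G 2 1 := by
  constructor
  · rintro ⟨I, hI, hadjI⟩
    choose a b hab hIv using hI
    classical
    letI : DecidableRel (evRel a b) := fun e f => Classical.dec _
    letI : Std.Total (evRel a b) := ⟨evRel_total a b⟩
    letI : IsTrans (V × Bool) (evRel a b) := ⟨evRel_trans a b⟩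
    set E := (Finset.univ : Finset V).toList with hE
    set L := E.map (fun v => (v, false)) ++ E.map (fun v => (v, true)) with hL
    set es := List.insertionSort (evRel a b) L with hes
    have hperm : List.Perm es L := List.perm_insertionSort _ _
    have hsorted : es.Pairwise (evRel a b) := List.pairwise_insertionSort _ _
    have hnodupL : L.Nodup := by
      rw [hL]
      refine List.Nodup.append ?_ ?_ ?_
      · exact (Finset.nodup_toList _).map (fun u v h => congrArg Prod.fst h)
      · exact (Finset.nodup_toList _).map (fun u v h => congrArg Prod.fst h)
      · intro e he1 he2
        simp only [List.mem_map] at he1 he2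
        obtain ⟨u, -, rfl⟩ := he1
        obtain ⟨v, -, hv⟩ := he2
        exact Bool.false_ne_true (congrArg Prod.snd hv).symm
    have hnodup : es.Nodup := hperm.nodup_iff.mpr hnodupL
    have hcnt : ∀ v : V, (es.map Prod.fst).count v = 2 := by
      intro v
      have h1 : List.Perm (es.map Prod.fst) (E ++ E) := by
        refine (hperm.map _).trans ?_
        rw [hL, List.map_append, List.map_map, List.map_map]
        simp only [Function.comp_def]
        simp
      rw [h1.count_eq, List.count_append]
      have hE1 : E.count v = 1 :=
        List.count_eq_one_of_mem (Finset.nodup_toList _) (by simp [hE, Finset.mem_toList])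
      omega
    refine ⟨es.map Prod.fst, ⟨fun v => ?_, fun x y hxy => ?_⟩, hcnt⟩
    · have h := hcnt v
      by_contra hv
      rw [List.count_eq_zero.mpr hv] at h
      omega
    · rw [hadjI x y hxy, patt_le_one_iff _ x y hxy (hcnt x) (hcnt y)]
      have k1 := keylemma a b hab es hsorted hnodup x y hxy (hcnt x) (hcnt y)
      have k2 : (es.map Prod.fst).filter (fun a => decide (a = x ∨ a = y)) = [y,y,x,x] ↔
          b y < a x := by
        rw [filter_swap]
        exact keylemma a b hab es hsorted hnodup y x hxy.symm (hcnt y) (hcnt x)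
      simp only [ne_eq, k1, k2, not_lt]
      rw [hIv x, hIv y, Set.Icc_inter_Icc, Set.nonempty_Icc]
      simp only [le_min_iff, max_le_iff]
      constructor
      · rintro ⟨⟨h1, h2⟩, h3, h4⟩; exact ⟨h2, h3⟩
      · rintro ⟨h1, h2⟩; exact ⟨⟨hab x, h1⟩, h2, hab y⟩
  · rintro ⟨w, ⟨hmemw, hadj⟩, hcnt⟩
    refine ⟨fun v => Set.Icc (fstIdx w v : ℝ) (sndIdx w v : ℝ),
      fun v => ⟨_, _, Nat.cast_le.mpr (fstIdx_le_sndIdx w v (hmemw v)), rfl⟩,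
      fun x y hxy => ?_⟩
    rw [hadj x y hxy, patt_le_one_iff w x y hxy (hcnt x) (hcnt y)]
    have k1 : w.filter (fun a => decide (a = x ∨ a = y)) = [x,x,y,y] ↔
        sndIdx w x < fstIdx w y := by
      rw [filter_eq_xxyy_iff_before w x y hxy (hcnt x) (hcnt y)]
      exact before_iff_sndIdx_lt_fstIdx w x y (hmemw x) (hmemw y)
    have k2 : w.filter (fun a => decide (a = x ∨ a = y)) = [y,y,x,x] ↔
        sndIdx w y < fstIdx w x := by
      rw [filter_swap, filter_eq_xxyy_iff_before w y x hxy.symm (hcnt y) (hcnt x)]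
      exact before_iff_sndIdx_lt_fstIdx w y x (hmemw y) (hmemw x)
    simp only [ne_eq, k1, k2, not_lt]
    rw [Set.Icc_inter_Icc, Set.nonempty_Icc]
    have h1 := fstIdx_le_sndIdx w x (hmemw x)
    have h2 := fstIdx_le_sndIdx w y (hmemw y)
    simp only [le_min_iff, max_le_iff, Nat.cast_le]
    omega
end

section
/- Let G be a simple graph with a vertex v. If the induced subgraph G \ v is permutationally representable (i.e., has a 0-11-representant that is a concatenation of permutations of its vertex set), then G is 1-11-representable. -/
/-- `w` is a concatenation of (one or more) permutations of `V`, i.e. of words in which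
every vertex of `V` occurs exactly once. -/
def IsPermConcat (V : Type*) [DecidableEq V] (w : List V) : Prop :=
  ∃ ps : List (List V), ps ≠ [] ∧ (∀ p ∈ ps, ∀ v : V, p.count v = 1) ∧ w = ps.flatten

namespace P11
variable {V : Type*} [DecidableEq V]

@[simp] lemma p11_nil : pattern11Count ([] : List V) = 0 := rfl
@[simp] lemma p11_single (a : V) : pattern11Count [a] = 0 := rfl

lemma p11_cons_cons (a b : V) (l : List V) :
    pattern11Count (a :: b :: l) = (if a = b then 1 else 0) + pattern11Count (b :: l) := by
  simp only [pattern11Count, List.tail_cons, List.zip_cons_cons, List.countP_cons]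
  split <;> simp_all <;> omega

def junc (l1 l2 : List V) : ℕ :=
  if l1.getLast? = l2.head? ∧ l1.getLast? ≠ none then 1 else 0

@[simp] lemma junc_nil_left (l : List V) : junc [] l = 0 := by simp [junc]
@[simp] lemma junc_nil_right (l : List V) : junc l [] = 0 := by
  simp only [junc, List.head?_nil]
  exact if_neg (fun h => h.2 h.1)

lemma junc_eq (l1 l2 : List V) (a b : V) (h1 : l1.getLast? = some a) (h2 : l2.head? = some b) :
    junc l1 l2 = if a = b then 1 else 0 := by
  simp [junc, h1, h2]

lemma junc_single (a : V) (b : V) (l : List V) :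
    junc [a] (b :: l) = if a = b then 1 else 0 := by
  simp [junc]

lemma p11_append (l1 l2 : List V) :
    pattern11Count (l1 ++ l2) = pattern11Count l1 + pattern11Count l2 + junc l1 l2 := by
  induction l1 with
  | nil => simp
  | cons a t ih =>
    cases t with
    | nil =>
      cases l2 with
      | nil => simp
      | cons b s =>
        have : ([a] ++ (b :: s)) = a :: b :: s := rfl
        rw [this, p11_cons_cons, junc_single]
        simp; omega
    | cons b t' =>
      have h1 : (a :: b :: t') ++ l2 = a :: b :: (t' ++ l2) := rfl
      rw [h1, p11_cons_cons]
      have h2 : b :: (t' ++ l2) = (b :: t') ++ l2 := rfl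
      rw [h2, ih, p11_cons_cons]
      have hj : junc (a :: b :: t') l2 = junc (b :: t') l2 := by
        simp [junc, List.getLast?_cons_cons]
      rw [hj]
      omega

lemma p11_append_le (l1 l2 : List V) :
    pattern11Count l1 + pattern11Count l2 ≤ pattern11Count (l1 ++ l2) := by
  rw [p11_append]; omega

lemma p11_map_inj {W : Type*} [DecidableEq W] (f : V → W) (hf : Function.Injective f)
    (l : List V) : pattern11Count (l.map f) = pattern11Count l := by
  induction l with
  | nil => simp
  | cons a t ih =>
    cases t with
    | nil => simp
    | cons b t' =>
      simp only [List.map_cons] at *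
      rw [p11_cons_cons, p11_cons_cons, ih]
      congr 1
      simp [hf.eq_iff]

lemma p11_nodup {l : List V} (h : l.Nodup) : pattern11Count l = 0 := by
  induction l with
  | nil => simp
  | cons a t ih =>
    cases t with
    | nil => simp
    | cons b t' =>
      rw [p11_cons_cons]
      have hab : a ≠ b := by simp_all
      have := ih h.of_cons
      simp [hab, this]

def dl (x y : V) : Option V → ℤ
  | some a => if a = x then 1 else if a = y then -1 else 0
  | none => 0

lemma alt_delta (x y : V) (hxy : x ≠ y) :
    ∀ l : List V, (∀ a ∈ l, a = x ∨ a = y) → pattern11Count l = 0 →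
      2 * ((l.count x : ℤ) - l.count y) = dl x y l.head? + dl x y l.getLast? := by
  intro l
  induction l with
  | nil => simp [dl]
  | cons a t ih =>
    intro hmem h0
    cases t with
    | nil =>
      rcases hmem a (by simp) with h | h <;> subst h
      · simp [dl, List.count_singleton, hxy, Ne.symm hxy]
      · simp [dl, List.count_singleton, hxy, Ne.symm hxy]
    | cons b t' =>
      rw [p11_cons_cons] at h0
      have hab : a ≠ b := by by_contra hc; simp [hc] at h0
      have h0' : pattern11Count (b :: t') = 0 := by omega
      have ihe := ih (fun c hc => hmem c (by simp [hc])) h0'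
      have ha := hmem a (by simp)
      have hb := hmem b (by simp)
      have hlast : (a :: b :: t').getLast? = (b :: t').getLast? := List.getLast?_cons_cons ..
      have hcx : ((a :: b :: t').count x : ℤ) = (b :: t').count x + (if a = x then 1 else 0) := by
        rw [List.count_cons]; split <;> simp_all
      have hcy : ((a :: b :: t').count y : ℤ) = (b :: t').count y + (if a = y then 1 else 0) := by
        rw [List.count_cons]; split <;> simp_all
      have hda : dl x y (a :: b :: t').head? = - dl x y (b :: t').head? := by
        rcases ha with h | h <;> rcases hb with h' | h' <;> subst h <;> subst h' <;>
          simp_all [dl, hxy, Ne.symm hxy]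
      have hia : (if a = x then (1:ℤ) else 0) - (if a = y then (1:ℤ) else 0) =
          dl x y ((a :: b :: t').head?) := by
        rcases ha with h | h <;> subst h <;> simp [dl, hxy, Ne.symm hxy]
      rw [hcx, hcy, hlast]
      have : 2 * ((b :: t').count x + (if a = x then (1:ℤ) else 0) -
          ((b :: t').count y + (if a = y then 1 else 0))) =
          2 * (((b :: t').count x : ℤ) - (b :: t').count y) +
          2 * ((if a = x then (1:ℤ) else 0) - (if a = y then 1 else 0)) := by ring
      rw [this, ihe, hia, hda]
      ring

lemma head_ne_getLast (x y : V) (hxy : x ≠ y) (l : List V) (hne : l ≠ [])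
    (hmem : ∀ a ∈ l, a = x ∨ a = y) (h0 : pattern11Count l = 0)
    (hc : l.count x = l.count y) :
    ∃ s t, l.head? = some s ∧ l.getLast? = some t ∧ s ≠ t := by
  have hs : l.head? = some (l.head hne) := List.head?_eq_head hne
  have ht : l.getLast? = some (l.getLast hne) := List.getLast?_eq_getLast hne
  refine ⟨l.head hne, l.getLast hne, hs, ht, ?_⟩
  intro he
  have h2 := alt_delta x y hxy l hmem h0
  rw [hc, sub_self, mul_zero, hs, ht, ← he] at h2
  rcases hmem _ (l.head_mem hne) with h | h <;>
    simp [dl, h, hxy, Ne.symm hxy] at h2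

lemma p11_sandwich_adj (x y : V) (hxy : x ≠ y) (M BP : List V) (hBP : BP.Nodup)
    (hMne : M ≠ []) (hM0 : pattern11Count M = 0) (hmem : ∀ a ∈ M, a = x ∨ a = y)
    (hc : M.count x = M.count y) :
    pattern11Count (BP ++ (M ++ M) ++ BP.reverse) ≤ 1 := by
  obtain ⟨s, t, hs, ht, hst⟩ := head_ne_getLast x y hxy M hMne hmem hM0 hc
  have hMM : pattern11Count (M ++ M) = 0 := by
    rw [p11_append, junc_eq M M t s ht hs, hM0]
    simp [Ne.symm hst]
  have hMMne : M ++ M ≠ [] := by simp [hMne]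
  have hhMM : (M ++ M).head? = some s := by
    rw [List.head?_append_of_ne_nil M hMne, hs]
  have hlMM : (M ++ M).getLast? = some t := by
    rw [List.getLast?_append_of_ne_nil M hMne, ht]
  rw [List.append_assoc, p11_append, p11_append, hMM, p11_nodup hBP,
    p11_nodup (List.nodup_reverse.mpr hBP)]
  have hhead : ((M ++ M) ++ BP.reverse).head? = some s := by
    rw [List.head?_append_of_ne_nil _ hMMne, hhMM]
  have hrev : BP.reverse.head? = BP.getLast? := List.head?_reverse
  rcases hL : BP.getLast? with _ | c
  · have j1 : junc BP ((M ++ M) ++ BP.reverse) = 0 := by simp [junc, hL]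
    have j2 : junc (M ++ M) BP.reverse = 0 := by
      simp [junc, hlMM, hrev, hL]
    omega
  · have j1 : junc BP ((M ++ M) ++ BP.reverse) = if c = s then 1 else 0 :=
      junc_eq _ _ c s hL hhead
    have j2 : junc (M ++ M) BP.reverse = if t = c then 1 else 0 :=
      junc_eq _ _ t c hlMM (by rw [hrev, hL])
    rw [j1, j2]
    rcases eq_or_ne c s with h | h
    · subst h
      simp [Ne.symm hst]
    · simp [h]
      split <;> omega

lemma p11_sandwich_ge (M l1 l3 : List V) (h : 1 ≤ pattern11Count M) :
    2 ≤ pattern11Count (l1 ++ (M ++ M) ++ l3) := by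
  have h1 := p11_append_le (l1 ++ (M ++ M)) l3
  have h2 := p11_append_le l1 (M ++ M)
  have h3 := p11_append_le M M
  omega

lemma vblock_spec (x v : V) (hxv : x ≠ v) (m : ℕ) :
    pattern11Count (x :: (List.replicate m ([v, x] : List V)).flatten) = 0 ∧
    (x :: (List.replicate m ([v, x] : List V)).flatten).getLast? = some x := by
  induction m with
  | zero => simp
  | succ n ih =>
    have hrep : (List.replicate (n+1) ([v, x] : List V)).flatten =
        v :: x :: (List.replicate n ([v, x] : List V)).flatten := by
      rw [List.replicate_succ]
      simp
    rw [hrep]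
    constructor
    · rw [p11_cons_cons, p11_cons_cons]
      simp [hxv, Ne.symm hxv, ih.1]
    · rw [List.getLast?_cons_cons, List.getLast?_cons_cons]
      exact ih.2

end P11

open P11 in
/-- if `G \ v` is permutationally representable (it has a 0-11-representant
that is a concatenation of permutations of its vertex set), then `G` is
1-11-representable. -/
theorem k11Representable_of_permRep_deleteVertex {V : Type*} [DecidableEq V] [Fintype V]
    (G : SimpleGraph V) (v : V)
    (h : ∃ w : List {u : V // u ≠ v},
      IsK11Rep (G.induce {u : V | u ≠ v}) 0 w ∧ IsPermConcat {u : V // u ≠ v} w) :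
    K11Representable G 1 := by
  classical
  obtain ⟨w, ⟨hmemw, hadjw⟩, ps, hpsne, hcnt, hflat⟩ := h
  obtain ⟨p0, rest, rfl⟩ : ∃ p0 rest, ps = p0 :: rest := by
    cases ps with
    | nil => exact absurd rfl hpsne
    | cons a l => exact ⟨a, l, rfl⟩
  set f : {u : V // u ≠ v} → V := Subtype.val with hf
  have hfinj : Function.Injective f := Subtype.val_injective
  set rest' : List (List {u : V // u ≠ v}) := rest ++ (p0 :: rest) with hrest'
  have hrest'ne : rest' ≠ [] := by simp [hrest']
  set u0 : List V := (p0.map f) ++ (rest'.map (fun p => v :: p.map f)).flatten with hu0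
  set B : List V := (Finset.univ.filter (fun b => ¬ b = v ∧ ¬ G.Adj v b)).toList with hB
  have hBnodup : B.Nodup := Finset.nodup_toList _
  have hBmem : ∀ b : V, b ∈ B ↔ (¬ b = v ∧ ¬ G.Adj v b) := by
    intro b; simp [hB]
  -- counts in w
  have hwcount : ∀ z : {u : V // u ≠ v}, w.count z = (p0 :: rest).length := by
    intro z
    rw [hflat, List.count_flatten]
    rw [List.map_congr_left (g := fun _ => 1) (fun p hp => by convert hcnt p hp z using 2; exact lawful_beq_subsingleton _ _), List.map_const']
    simp
  refine ⟨B ++ u0 ++ B.reverse, ?_, ?_⟩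
  · -- membership
    intro z
    by_cases hz : z = v
    · rw [hz]
      have h1 : v ∈ (rest'.map (fun p => v :: p.map f)).flatten := by
        rw [List.mem_flatten]
        refine ⟨v :: ((rest'.head hrest'ne).map f), ?_, by simp⟩
        exact List.mem_map_of_mem (List.head_mem hrest'ne)
      have h2 : v ∈ u0 := by
        rw [hu0]; exact List.mem_append.mpr (Or.inr h1)
      exact List.mem_append.mpr (Or.inl (List.mem_append.mpr (Or.inr h2)))
    · have hzmem : (⟨z, hz⟩ : {u : V // u ≠ v}) ∈ p0 := by
        have := hcnt p0 (by simp) ⟨z, hz⟩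
        exact (@List.count_pos_iff _ instBEqOfDecidableEq _ _ _).mp (by omega)
      have h1 : z ∈ p0.map f := List.mem_map_of_mem hzmem
      have h2 : z ∈ u0 := by
        rw [hu0]; exact List.mem_append.mpr (Or.inl h1)
      exact List.mem_append.mpr (Or.inl (List.mem_append.mpr (Or.inr h2)))
  · -- adjacency
    have hufilter : ∀ P : V → Bool, (B ++ u0 ++ B.reverse).filter P =
        B.filter P ++ u0.filter P ++ (B.filter P).reverse := by
      intro P
      rw [List.filter_append, List.filter_append, List.filter_reverse]
    have hblock : ∀ (x : V) (P : V → Bool), (∀ a : {u : V // u ≠ v}, P (f a) = (f a == x)) →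
        x ≠ v → ∀ p ∈ (p0 :: rest), (p.map f).filter P = [x] := by
      intro x P hPf hxv p hp
      have h1 : (p.map f).filter P = (p.map f).filter (fun a => a == x) := by
        apply List.filter_congr
        intro a ha
        obtain ⟨b, _, rfl⟩ := List.mem_map.mp ha
        exact hPf b
      rw [h1, List.filter_beq]
      have h2 : (p.map f).count x = 1 := by
        have : x = f ⟨x, hxv⟩ := rfl
        rw [this, List.count_map_of_injective _ f hfinj]
        convert hcnt p hp ⟨x, hxv⟩ using 2; exact lawful_beq_subsingleton _ _
      rw [h2]
      rfl
    have keyv : ∀ x : V, x ≠ v →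
        (G.Adj v x ↔ pattern11Count ((B ++ u0 ++ B.reverse).filter
          (fun a => decide (a = x ∨ a = v))) ≤ 1) := by
      intro x hxv
      set P : V → Bool := fun a => decide (a = x ∨ a = v) with hP
      have hPf : ∀ a : {u : V // u ≠ v}, P (f a) = (f a == x) := by
        intro a
        have hav : f a ≠ v := a.2
        by_cases h : f a = x <;> simp [hP, h, hav]
      have hbl := hblock x P hPf hxv
      have hPv : P v = true := by simp [hP]
      set F : List V := x :: (List.replicate rest'.length ([v, x] : List V)).flatten with hF
      have hu0f : u0.filter P = F := by
        rw [hu0, List.filter_append, hbl p0 (by simp), List.filter_flatten, List.map_map]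
        have hmap : rest'.map (List.filter P ∘ fun p => v :: p.map f) =
            rest'.map (fun _ => ([v, x] : List V)) := by
          apply List.map_congr_left
          intro p hp
          have hp' : p ∈ p0 :: rest := by
            rcases List.mem_append.mp hp with h | h
            · exact List.mem_cons_of_mem _ h
            · exact h
          show List.filter P (v :: p.map f) = [v, x]
          rw [List.filter_cons_of_pos hPv, hbl p hp']
        rw [hmap, List.map_const']
        rw [hF]
        rfl
      have hvs := P11.vblock_spec x v hxv rest'.length
      have hBf : B.filter P = if G.Adj v x then [] else [x] := by
        split_ifs with hadj
        · apply List.filter_eq_nil_iff.mpr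
          intro b hb
          obtain ⟨hbv, hbn⟩ := (hBmem b).mp hb
          simp only [hP, decide_eq_true_eq]
          rintro (rfl | rfl)
          · exact hbn hadj
          · exact hbv rfl
        · have hxB : x ∈ B := (hBmem x).mpr ⟨hxv, hadj⟩
          have h1 : B.filter P = B.filter (fun a => a == x) := by
            apply List.filter_congr
            intro b hb
            have hbv : b ≠ v := ((hBmem b).mp hb).1
            by_cases h : b = x <;> simp [hP, h, hbv]
          rw [h1, List.filter_beq, List.count_eq_one_of_mem hBnodup hxB]
          rfl
      rw [hufilter P, hu0f, hBf]
      split_ifs with hadj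
      · simp only [List.nil_append, List.reverse_nil, List.append_nil]
        rw [hvs.1]
        simp [hadj]
      · have hFne : F ≠ [] := by simp [hF]
        have hcalc : pattern11Count ([x] ++ F ++ [x].reverse) = 2 := by
          have hrev : ([x] : List V).reverse = [x] := rfl
          rw [hrev, P11.p11_append, P11.p11_append]
          have j1 : P11.junc ([x] : List V) F = 1 := by
            rw [P11.junc_eq [x] F x x rfl (by rw [hF]; rfl)]
            simp
          have j2 : P11.junc ([x] ++ F) ([x] : List V) = 1 := by
            have hgl : ([x] ++ F).getLast? = some x := by
              rw [List.getLast?_append_of_ne_nil _ hFne, hvs.2]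
            rw [P11.junc_eq ([x] ++ F) [x] x x hgl rfl]
            simp
          rw [j1, j2, hvs.1]
          simp [pattern11Count]
        rw [hcalc]
        simp [hadj]
    intro x y hxy
    by_cases hxv : x = v
    · subst hxv
      have hpe : (fun a : V => decide (a = x ∨ a = y)) = (fun a => decide (a = y ∨ a = x)) := by
        funext a
        exact decide_eq_decide.mpr or_comm
      rw [hpe]
      exact keyv y (Ne.symm hxy)
    · by_cases hyv : y = v
      · subst hyv
        rw [G.adj_comm]
        exact keyv x hxv
      · -- main case: x ≠ v, y ≠ v
        set x' : {u : V // u ≠ v} := ⟨x, hxv⟩ with hx'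
        set y' : {u : V // u ≠ v} := ⟨y, hyv⟩ with hy'
        have hxy' : x' ≠ y' := by
          intro hc
          exact hxy (congrArg f hc)
        set P : V → Bool := fun a => decide (a = x ∨ a = y) with hP
        set Q : {u : V // u ≠ v} → Bool := fun a => decide (a = x' ∨ a = y') with hQ
        set M : List V := (w.filter Q).map f with hM
        have hPf : ∀ a : {u : V // u ≠ v}, P (f a) = Q a := by
          intro a
          apply decide_eq_decide.mpr
          simp [hP, hQ, hx', hy', hf, Subtype.ext_iff]
        have hwQ : w.filter (fun a => P (f a)) = w.filter Q :=
          List.filter_congr (fun a _ => hPf a)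
        have hfilter_map : (w.map f).filter P = M := by
          rw [List.filter_map]
          rw [show (P ∘ f) = fun a => P (f a) from rfl, hwQ]
        have hp11M : pattern11Count M = pattern11Count (w.filter Q) :=
          P11.p11_map_inj f hfinj _
        have hQx' : Q x' = true := by simp [hQ]
        have hQy' : Q y' = true := by simp [hQ]
        have hMcx : M.count x = (p0 :: rest).length := by
          have hxx : x = f x' := rfl
          rw [hM, hxx, List.count_map_of_injective _ f hfinj, List.count_filter hQx', hwcount]
        have hMcy : M.count y = (p0 :: rest).length := by
          have hyy : y = f y' := rfl
          rw [hM, hyy, List.count_map_of_injective _ f hfinj, List.count_filter hQy', hwcount]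
        have hMne : M ≠ [] := by
          intro hnil
          rw [hnil] at hMcx
          simp at hMcx
        have hmemM : ∀ a ∈ M, a = x ∨ a = y := by
          intro a ha
          rw [← hfilter_map] at ha
          have := List.of_mem_filter ha
          exact of_decide_eq_true this
        have hu0filter : u0.filter P = M ++ M := by
          rw [hu0, List.filter_append, List.filter_flatten, List.map_map]
          have hPv : P v = false := by
            apply decide_eq_false
            push_neg
            exact ⟨fun hc => hxv hc.symm, fun hc => hyv hc.symm⟩
          have hmap : rest'.map (List.filter P ∘ fun p => v :: p.map f) =
              rest'.map (fun p => (p.map f).filter P) := by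
            apply List.map_congr_left
            intro p hp
            show List.filter P (v :: p.map f) = _
            simp [List.filter_cons, hPv]
          rw [hmap]
          have hMeq : M = ((p0 :: rest).map (fun p => (p.map f).filter P)).flatten := by
            rw [← hfilter_map, hflat, List.map_flatten, List.filter_flatten, List.map_map]
            rfl
          rw [hMeq, hrest']
          simp [List.map_append, List.flatten_append, List.flatten_cons, List.append_assoc]
        have hadj_ind : (G.induce {u : V | u ≠ v}).Adj x' y' ↔ G.Adj x y := by
          simp [SimpleGraph.comap_adj]
          exact Iff.rfl
        have hiff : (G.induce {u : V | u ≠ v}).Adj x' y' ↔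
            pattern11Count (w.filter Q) ≤ 0 := hadjw x' y' hxy'
        rw [hufilter P, hu0filter]
        constructor
        · intro hadj
          have h0 : pattern11Count (w.filter Q) = 0 :=
            Nat.le_zero.mp (hiff.mp (hadj_ind.mpr hadj))
          exact P11.p11_sandwich_adj x y hxy M (B.filter P) (hBnodup.filter P) hMne
            (by rw [hp11M, h0]) hmemM (by rw [hMcx, hMcy])
        · intro hle
          by_contra hadj
          have h2 : ¬ pattern11Count (w.filter Q) ≤ 0 :=
            fun hc => hadj (hadj_ind.mp (hiff.mpr hc))
          have h1 : 1 ≤ pattern11Count M := by omega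
          have h3 := P11.p11_sandwich_ge M (B.filter P) (B.filter P).reverse h1
          omega
end

section
/- Let G be a word-representable (i.e., 0-11-representable) simple graph and let K be a subset of its vertex set. Then the graph G_K, obtained from G by deleting all edges whose both endpoints lie in K (keeping all vertices), is 1-11-representable. -/
section Aux
variable {V : Type*} [DecidableEq V]

lemma pc_nil : pattern11Count ([] : List V) = 0 := rfl

lemma pc_cons (a : V) (s : List V) :
    pattern11Count (a :: s) =
      (if s.head? = some a then 1 else 0) + pattern11Count s := by
  cases s with
  | nil => simp [pattern11Count]
  | cons b t =>
      simp only [pattern11Count, List.zip, List.head?]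
      by_cases h : b = a <;> simp [List.countP_cons, h, eq_comm] <;> omega

lemma pc_cons_cons (b c : V) (t : List V) :
    pattern11Count (b :: c :: t) =
      (if c = b then 1 else 0) + pattern11Count (c :: t) := by
  rw [pc_cons]; simp

lemma pc_append_cons (l : List V) (a : V) (s : List V) :
    pattern11Count (l ++ a :: s) =
      pattern11Count l + pattern11Count (a :: s) +
        (if l.getLast? = some a then 1 else 0) := by
  induction l with
  | nil => simp [pc_nil]
  | cons b t ih =>
      cases t with
      | nil =>
          simp only [List.cons_append, List.nil_append, pc_cons_cons, pc_nil,
            List.getLast?_singleton]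
          have hpb : pattern11Count [b] = 0 := rfl
          rw [hpb]
          by_cases h : b = a
          · subst h; simp [Nat.add_comm]
          · have h2 : ¬ a = b := fun e => h e.symm
            simp [h, h2]
      | cons c t' =>
          rw [List.cons_append, List.cons_append, pc_cons_cons]
          rw [show (c :: (t' ++ a :: s)) = (c :: t') ++ a :: s from rfl, ih,
            pc_cons_cons, List.getLast?_cons_cons]
          omega

lemma pc_prefix (l s : List V) : pattern11Count l ≤ pattern11Count (l ++ s) := by
  cases s with
  | nil => simp
  | cons a s' => rw [pc_append_cons]; omega

lemma pc_eq_zero_iff_chain' (u : List V) :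
    pattern11Count u = 0 ↔ List.Chain' (· ≠ ·) u := by
  induction u with
  | nil => simp [pc_nil]; exact List.isChain_nil
  | cons a s ih =>
      rw [pc_cons]; unfold List.Chain'; rw [List.isChain_cons]
      constructor
      · intro h
        have h1 : s.head? ≠ some a := by intro hh; simp [hh] at h
        refine ⟨fun y hy => ?_, ih.mp (by omega)⟩
        intro hay
        exact h1 (by rw [hay]; exact Option.mem_def.mp hy)
      · rintro ⟨h1, h2⟩
        have : s.head? ≠ some a := by
          intro hh; exact (h1 a (Option.mem_def.mpr hh)) rfl
        simp [this, ih.mpr h2]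

lemma alt_spec : ∀ (n : ℕ) {x y : V}, x ≠ y → ∀ u : List V, u.length ≤ n →
    List.Chain' (· ≠ ·) u → (∀ a ∈ u, a = x ∨ a = y) → u.head? = some x →
    u.count x = (u.length + 1) / 2 ∧ u.count y = u.length / 2 ∧
      u.getLast? = some (if u.length % 2 = 1 then x else y) := by
  intro n
  induction n with
  | zero =>
      intro x y hxy u hl hc hs hh
      have : u = [] := List.eq_nil_of_length_eq_zero (Nat.le_zero.mp hl)
      subst this; simp at hh
  | succ n ih =>
      intro x y hxy u hl hc hs hh
      cases u with
      | nil => simp at hh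
      | cons a t =>
        have ha : x = a := by simpa [eq_comm] using hh
        subst ha
        cases t with
        | nil => simp [hxy, hxy.symm, List.count_singleton]
        | cons b t' =>
            obtain ⟨hab, hct⟩ := List.isChain_cons_cons.mp hc
            have hb : y = b := by
              rcases hs b (by simp) with h | h
              · exact absurd h.symm hab
              · exact h.symm
            subst hb
            have hlt : (y :: t').length ≤ n := by
              simp at hl ⊢; omega
            have hst : ∀ a ∈ y :: t', a = y ∨ a = x := by
              intro a haa
              rcases hs a (List.mem_cons_of_mem _ haa) with h | h
              · exact Or.inr h
              · exact Or.inl h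
            obtain ⟨c1, c2, c3⟩ := ih hxy.symm (y :: t') hlt hct hst rfl
            simp only [List.length_cons] at c1 c2 c3 ⊢
            refine ⟨?_, ?_, ?_⟩
            · rw [List.count_cons_self, c2]; omega
            · rw [List.count_cons_of_ne hxy]; omega
            · rw [List.getLast?_cons_cons, c3]
              congr 1
              by_cases hp : t'.length % 2 = 1
              · rw [if_neg (by omega), if_pos (by omega)]
              · rw [if_pos (by omega), if_neg (by omega)]

lemma alt_head {x y : V} (hxy : x ≠ y) {u : List V} (hc : List.Chain' (· ≠ ·) u)
    (hs : ∀ a ∈ u, a = x ∨ a = y) (h : u.count x < u.count y) :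
    u.head? = some y := by
  cases u with
  | nil => simp at h
  | cons a t =>
      rcases hs a (by simp) with ha | ha
      · subst ha
        obtain ⟨c1, c2, -⟩ := alt_spec (a :: t).length hxy (a :: t) le_rfl hc hs rfl
        omega
      · subst ha; rfl

lemma alt_getLast {x y : V} (hxy : x ≠ y) {u : List V} (hc : List.Chain' (· ≠ ·) u)
    (hs : ∀ a ∈ u, a = x ∨ a = y) (h : u.count x < u.count y) :
    u.getLast? = some y := by
  have hc' : List.Chain' (· ≠ ·) u.reverse := by
    unfold List.Chain'; rw [List.isChain_reverse]
    exact List.IsChain.imp (fun a b hab => (by exact fun h' => hab h'.symm : b ≠ a)) hc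
  have := alt_head hxy hc' (fun a ha => hs a (List.mem_reverse.mp ha))
    (by simpa [List.count_reverse] using h)
  rwa [List.head?_reverse] at this

lemma alt_last_ne_head {x y : V} (hxy : x ≠ y) {u : List V} (hc : List.Chain' (· ≠ ·) u)
    (hs : ∀ a ∈ u, a = x ∨ a = y) (h : u.count x = u.count y) (hne : u ≠ []) :
    u.getLast? ≠ u.head? := by
  cases u with
  | nil => exact absurd rfl hne
  | cons a t =>
      rcases hs a (by simp) with ha | ha
      · subst ha
        obtain ⟨c1, c2, c3⟩ := alt_spec (a :: t).length hxy (a :: t) le_rfl hc hs rfl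
        have hev : (a :: t).length % 2 = 0 := by omega
        rw [c3, if_neg (by omega)]
        simp only [List.head?_cons, ne_eq, Option.some_inj]
        exact hxy.symm
      · subst ha
        obtain ⟨c1, c2, c3⟩ := alt_spec (a :: t).length hxy.symm (a :: t) le_rfl hc
          (fun b hb => (hs b hb).symm) rfl
        have hev : (a :: t).length % 2 = 0 := by omega
        rw [c3, if_neg (by omega)]
        simp only [List.head?_cons, ne_eq, Option.some_inj]
        exact hxy

lemma filter_dedup (l : List V) (q : V → Bool) :
    (l.filter q).dedup = l.dedup.filter q := by
  induction l with
  | nil => simp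
  | cons a t ih =>
      by_cases hq : q a
      · by_cases hm : a ∈ t
        · rw [List.filter_cons_of_pos hq, List.dedup_cons_of_mem hm,
            List.dedup_cons_of_mem (by exact List.mem_filter.mpr ⟨hm, hq⟩), ih]
        · rw [List.filter_cons_of_pos hq,
            List.dedup_cons_of_notMem (fun hmm => hm (List.mem_filter.mp hmm).1),
            List.dedup_cons_of_notMem hm, List.filter_cons_of_pos hq, ih]
      · rw [List.filter_cons_of_neg hq]
        by_cases hm : a ∈ t
        · rw [List.dedup_cons_of_mem hm, ih]
        · rw [List.dedup_cons_of_notMem hm, List.filter_cons_of_neg hq, ih]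

omit [DecidableEq V] in
lemma const_alt {z : V} {t : List V} (hc : List.Chain' (· ≠ ·) t)
    (hs : ∀ a ∈ t, a = z) : t = [] ∨ t = [z] := by
  match t with
  | [] => exact Or.inl rfl
  | [a] => exact Or.inr (by rw [hs a (by simp)])
  | a :: b :: t' =>
      exfalso
      have := (List.isChain_cons_cons.mp hc).1
      rw [hs a (by simp), hs b (by simp)] at this
      exact this rfl

lemma alt_dedup {x y : V} (hxy : x ≠ y) : ∀ (u : List V),
    List.Chain' (· ≠ ·) u → (∀ a ∈ u, a = x ∨ a = y) → x ∈ u → y ∈ u →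
    ∃ a b : V, u.dedup = [a, b] ∧ a ≠ b ∧ u.getLast? = some b := by
  intro u
  induction u with
  | nil => intro _ _ hx; simp at hx
  | cons c t ih =>
      intro hc hs hx hy
      by_cases hxt : x ∈ t ∧ y ∈ t
      · have hct : c ∈ t := by
          rcases hs c (by simp) with h | h <;> rw [h] <;> [exact hxt.1; exact hxt.2]
        cases t with
        | nil => simp at hct
        | cons d t'' =>
            obtain ⟨a, b, h1, h2, h3⟩ := ih (List.isChain_cons_cons.mp hc).2
              (fun a ha => hs a (List.mem_cons_of_mem _ ha)) hxt.1 hxt.2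
            exact ⟨a, b, by rw [List.dedup_cons_of_mem hct, h1],
              h2, by rw [List.getLast?_cons_cons, h3]⟩
      · rcases Decidable.not_and_iff_or_not.mp hxt with hxn | hyn
        · have hcx : c = x := by
            rcases List.mem_cons.mp hx with h | h
            · exact h.symm
            · exact absurd h hxn
          subst hcx
          have hty : ∀ a ∈ t, a = y := by
            intro a ha
            rcases hs a (List.mem_cons_of_mem _ ha) with h | h
            · exact absurd (h ▸ ha) hxn
            · exact h
          rcases const_alt (List.isChain_cons.mp hc).2 hty with h | h
          · exfalso; rw [h] at hy; simp at hy
            exact hxy hy.symm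
          · subst h
            exact ⟨c, y, by rw [List.dedup_cons_of_notMem (by simp [hxy])]; rfl,
              hxy, rfl⟩
        · have hcy : c = y := by
            rcases List.mem_cons.mp hy with h | h
            · exact h.symm
            · exact absurd h hyn
          subst hcy
          have htx : ∀ a ∈ t, a = x := by
            intro a ha
            rcases hs a (List.mem_cons_of_mem _ ha) with h | h
            · exact h
            · exact absurd (h ▸ ha) hyn
          rcases const_alt (List.isChain_cons.mp hc).2 htx with h | h
          · exfalso; rw [h] at hx; simp at hx
            exact hxy hx
          · subst h
            exact ⟨c, x, by rw [List.dedup_cons_of_notMem (by simp [hxy.symm])]; rfl,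
              hxy.symm, rfl⟩

def dbl : Finset V → List V → List V
  | _, [] => []
  | F, a :: t => if a ∈ F then a :: a :: dbl (F.erase a) t else a :: dbl F t

lemma dbl_head? (F : Finset V) (l : List V) : (dbl F l).head? = l.head? := by
  cases l with
  | nil => rfl
  | cons a t =>
      rw [dbl]
      by_cases h : a ∈ F <;> simp [h]

lemma mem_dbl {b : V} : ∀ (F : Finset V) (l : List V), b ∈ l → b ∈ dbl F l := by
  intro F l
  induction l generalizing F with
  | nil => simp
  | cons a t ih =>
      intro hb
      rw [dbl]
      by_cases h : a ∈ F <;> simp [h] <;>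
        (rcases List.mem_cons.mp hb with h' | h'
         · exact Or.inl h'
         · exact Or.inr (ih _ h'))

lemma dbl_congr : ∀ (l : List V) (F F' : Finset V),
    (∀ b ∈ l, b ∈ F ↔ b ∈ F') → dbl F l = dbl F' l := by
  intro l
  induction l with
  | nil => intro _ _ _; rfl
  | cons a t ih =>
      intro F F' hFF
      rw [dbl, dbl]
      by_cases h : a ∈ F
      · rw [if_pos ((hFF a (by simp)).mp h), if_pos h]
        rw [ih (F.erase a) (F'.erase a) (fun b hb => by
          simp only [Finset.mem_erase]
          exact and_congr_right (fun _ => hFF b (List.mem_cons_of_mem _ hb)))]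
      · rw [if_neg (fun h' => h ((hFF a (by simp)).mpr h')), if_neg h]
        rw [ih F F' (fun b hb => hFF b (List.mem_cons_of_mem _ hb))]

lemma dbl_filter (q : V → Bool) : ∀ (l : List V) (F : Finset V),
    (dbl F l).filter q = dbl F (l.filter q) := by
  intro l
  induction l with
  | nil => intro F; rfl
  | cons a t ih =>
      intro F
      rw [dbl]
      by_cases h : a ∈ F
      · rw [if_pos h]
        by_cases hq : q a
        · rw [List.filter_cons_of_pos hq, List.filter_cons_of_pos hq,
            List.filter_cons_of_pos hq, ih, dbl, if_pos h]
        · rw [List.filter_cons_of_neg hq, List.filter_cons_of_neg hq,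
            List.filter_cons_of_neg hq, ih]
          exact dbl_congr _ _ _ (fun b hb => by
            have hbq := (List.mem_filter.mp hb).2
            have : b ≠ a := fun e => hq (e ▸ hbq)
            simp [Finset.mem_erase, this])
      · rw [if_neg h]
        by_cases hq : q a
        · rw [List.filter_cons_of_pos hq, List.filter_cons_of_pos hq, ih, dbl, if_neg h]
        · rw [List.filter_cons_of_neg hq, List.filter_cons_of_neg hq, ih]

lemma pc_dbl : ∀ (l : List V) (F : Finset V),
    pattern11Count (dbl F l) = pattern11Count l + (l.toFinset ∩ F).card := by
  intro l
  induction l with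
  | nil => intro F; simp [dbl, pc_nil]
  | cons a t ih =>
      intro F
      rw [dbl]
      by_cases h : a ∈ F
      · rw [if_pos h, pc_cons_cons, if_pos rfl, pc_cons, dbl_head?, ih, pc_cons]
        have h1 : (a :: t).toFinset ∩ F = insert a (t.toFinset ∩ F.erase a) := by
          ext b
          simp only [List.toFinset_cons, Finset.mem_inter, Finset.mem_insert,
            Finset.mem_erase]
          constructor
          · rintro ⟨hb1 | hb1, hb2⟩
            · exact Or.inl hb1
            · by_cases hba : b = a
              · exact Or.inl hba
              · exact Or.inr ⟨hb1, hba, hb2⟩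
          · rintro (hb | ⟨hb1, hb2, hb3⟩)
            · exact ⟨Or.inl hb, hb ▸ h⟩
            · exact ⟨Or.inr hb1, hb3⟩
        rw [h1, Finset.card_insert_of_notMem (by simp)]
        omega
      · rw [if_neg h, pc_cons, dbl_head?, ih, pc_cons]
        have h1 : (a :: t).toFinset ∩ F = t.toFinset ∩ F := by
          ext b
          simp only [List.toFinset_cons, Finset.mem_inter, Finset.mem_insert]
          constructor
          · rintro ⟨hb1 | hb1, hb2⟩
            · exact absurd (hb1 ▸ hb2) h
            · exact ⟨hb1, hb2⟩
          · rintro ⟨hb1, hb2⟩; exact ⟨Or.inr hb1, hb2⟩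
        rw [h1]
        omega

section Unif
variable [Fintype V] (G : SimpleGraph V)

lemma unif : ∀ (n : ℕ) (w : List V) (m : ℕ),
    (∀ v : V, v ∈ w) →
    (∀ x y : V, x ≠ y →
      (G.Adj x y ↔ pattern11Count (w.filter (fun a => decide (a = x ∨ a = y))) = 0)) →
    (∀ v : V, w.count v ≤ m) →
    (∑ v : V, (m - w.count v)) ≤ n →
    ∃ w' : List V, (∀ v : V, v ∈ w') ∧
      (∀ x y : V, x ≠ y →
        (G.Adj x y ↔ pattern11Count (w'.filter (fun a => decide (a = x ∨ a = y))) = 0)) ∧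
      (∀ v : V, w'.count v = m) := by
  intro n
  induction n with
  | zero =>
      intro w m hmem hrep hle hsum
      refine ⟨w, hmem, hrep, fun v => ?_⟩
      have h1 : m - w.count v ≤ ∑ u : V, (m - w.count u) :=
        Finset.single_le_sum (f := fun u => m - w.count u)
          (fun i _ => Nat.zero_le _) (Finset.mem_univ v)
      have := hle v
      omega
  | succ n ih =>
      intro w m hmem hrep hle hsum
      by_cases hall : ∀ v : V, w.count v = m
      · exact ⟨w, hmem, hrep, hall⟩
      · push_neg at hall
        obtain ⟨v₀, hv₀⟩ := hall
        have hv₀' : w.count v₀ < m := lt_of_le_of_ne (hle v₀) hv₀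
        set S : V → Bool := fun a => decide (w.count a < m) with hS
        set p : List V := w.dedup.filter S with hp
        set w₂ : List V := w ++ p with hw₂
        have hcp : ∀ v : V, p.count v = if w.count v < m then 1 else 0 := by
          intro v
          by_cases hv : w.count v < m
          · rw [hp, List.count_filter (by simp [hS, hv]),
              List.count_dedup, if_pos (hmem v), if_pos hv]
          · rw [if_neg hv, hp, List.count_eq_zero]
            intro hmm
            have := (List.mem_filter.mp hmm).2
            simp [hS] at this
            exact hv this
        have hc2 : ∀ v : V, w₂.count v = w.count v + (if w.count v < m then 1 else 0) := by
          intro v; rw [hw₂, List.count_append, hcp]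
        -- representation is preserved
        have hrep2 : ∀ x y : V, x ≠ y →
            (G.Adj x y ↔
              pattern11Count (w₂.filter (fun a => decide (a = x ∨ a = y))) = 0) := by
          intro x y hxy
          set Pb : V → Bool := fun a => decide (a = x ∨ a = y) with hPb
          set u : List V := w.filter Pb with hu
          have hsplit : w₂.filter Pb = u ++ (w.filter (fun a => Pb a && S a)).dedup := by
            rw [hw₂, List.filter_append, hp, List.filter_filter, filter_dedup]
          have hsub : ∀ a ∈ u, a = x ∨ a = y := by
            intro a ha
            have := (List.mem_filter.mp ha).2
            simpa [hPb] using this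
          have hxu : x ∈ u := List.mem_filter.mpr ⟨hmem x, by simp [hPb]⟩
          have hyu : y ∈ u := List.mem_filter.mpr ⟨hmem y, by simp [hPb]⟩
          have hcx : u.count x = w.count x := List.count_filter (by simp [hPb])
          have hcy : u.count y = w.count y := List.count_filter (by simp [hPb])
          -- backward: no new 11 removal
          have hback : pattern11Count (w₂.filter Pb) = 0 → pattern11Count u = 0 := by
            rw [hsplit]; intro h0
            have := pc_prefix u ((w.filter (fun a => Pb a && S a)).dedup)
            omega
          constructor
          · intro hadj
            have hu0 : pattern11Count u = 0 := (hrep x y hxy).mp hadj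
            have hchain : List.Chain' (· ≠ ·) u := (pc_eq_zero_iff_chain' u).mp hu0
            rw [hsplit, pc_eq_zero_iff_chain']
            by_cases hSx : w.count x < m <;> by_cases hSy : w.count y < m
            · -- both deficient : appended = u.dedup
              have heq : w.filter (fun a => Pb a && S a) = u := by
                rw [hu]; apply List.filter_congr
                intro a _
                by_cases hPa : a = x ∨ a = y
                · have : S a = true := by
                    rcases hPa with h | h <;> subst h <;> simp [hS, hSx, hSy]
                  simp [hPb, hPa, this]
                · simp [hPb, hPa]
              rw [heq]
              obtain ⟨a, b, hd, hab, hlast⟩ := alt_dedup hxy u hchain hsub hxu hyu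
              rw [hd]; unfold List.Chain'; rw [List.isChain_append]
              refine ⟨hchain, by simp [hab], ?_⟩
              intro z hz z' hz'
              rw [hlast] at hz
              simp at hz hz'
              subst hz; subst hz'
              exact hab.symm
            · -- x deficient, y not
              have heq : w.filter (fun a => Pb a && S a) = w.filter (fun a => decide (a = x)) := by
                apply List.filter_congr
                intro a _
                by_cases hax : a = x
                · subst hax; simp [hPb, hS, hSx]
                · by_cases hay : a = y
                  · subst hay; simp [hPb, hS, hSy, hax]
                  · simp [hPb, hax, hay]
              have hrepl : w.filter (fun a => decide (a = x)) =
                  List.replicate ((w.filter (fun a => decide (a = x))).length) x :=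
                List.eq_replicate_of_mem (fun b hb => by
                  simpa using (List.mem_filter.mp hb).2)
              have hlen : (w.filter (fun a => decide (a = x))).length ≠ 0 := by
                intro h0
                have : x ∈ w.filter (fun a => decide (a = x)) :=
                  List.mem_filter.mpr ⟨hmem x, by simp⟩
                rw [List.length_eq_zero_iff.mp h0] at this
                simp at this
              rw [heq, hrepl, List.replicate_dedup hlen]; unfold List.Chain'; rw [List.isChain_append]
              refine ⟨hchain, by simp, ?_⟩
              intro z hz z' hz'
              have hym : w.count y = m := le_antisymm (hle y) (not_lt.mp hSy)
              have hlast : u.getLast? = some y :=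
                alt_getLast hxy hchain hsub (by rw [hcx, hcy, hym]; exact hSx)
              rw [hlast] at hz
              simp at hz hz'
              subst hz; subst hz'
              exact hxy.symm
            · -- y deficient, x not
              have heq : w.filter (fun a => Pb a && S a) = w.filter (fun a => decide (a = y)) := by
                apply List.filter_congr
                intro a _
                by_cases hay : a = y
                · subst hay; simp [hPb, hS, hSy]
                · by_cases hax : a = x
                  · subst hax; simp [hPb, hS, hSx, hay]
                  · simp [hPb, hax, hay]
              have hrepl : w.filter (fun a => decide (a = y)) =
                  List.replicate ((w.filter (fun a => decide (a = y))).length) y :=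
                List.eq_replicate_of_mem (fun b hb => by
                  simpa using (List.mem_filter.mp hb).2)
              have hlen : (w.filter (fun a => decide (a = y))).length ≠ 0 := by
                intro h0
                have : y ∈ w.filter (fun a => decide (a = y)) :=
                  List.mem_filter.mpr ⟨hmem y, by simp⟩
                rw [List.length_eq_zero_iff.mp h0] at this
                simp at this
              rw [heq, hrepl, List.replicate_dedup hlen]; unfold List.Chain'; rw [List.isChain_append]
              refine ⟨hchain, by simp, ?_⟩
              intro z hz z' hz'
              have hxm : w.count x = m := le_antisymm (hle x) (not_lt.mp hSx)
              have hlast : u.getLast? = some x :=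
                alt_getLast hxy.symm hchain (fun a ha => (hsub a ha).symm)
                  (by rw [hcx, hcy, hxm]; exact hSy)
              rw [hlast] at hz
              simp at hz hz'
              subst hz; subst hz'
              exact hxy
            · -- neither deficient : appended = []
              have heq : w.filter (fun a => Pb a && S a) = [] := by
                rw [List.filter_eq_nil_iff]
                intro a ha
                simp only [hPb, hS, Bool.and_eq_true, decide_eq_true_eq, not_and]
                rintro (h | h) <;> subst h
                · exact hSx
                · exact hSy
              rw [heq]
              simpa using hchain
          · intro h0
            exact (hrep x y hxy).mpr (hback h0)
        -- apply induction hypothesis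
        have hle2 : ∀ v : V, w₂.count v ≤ m := by
          intro v; rw [hc2]
          have := hle v
          by_cases hv : w.count v < m <;> simp [hv] <;> omega
        have hmem2 : ∀ v : V, v ∈ w₂ := fun v => by
          rw [hw₂]; exact List.mem_append_left _ (hmem v)
        have hsum2 : (∑ v : V, (m - w₂.count v)) ≤ n := by
          have hlt : (∑ v : V, (m - w₂.count v)) < ∑ v : V, (m - w.count v) := by
            apply Finset.sum_lt_sum
            · intro i _
              rw [hc2]
              by_cases hv : w.count i < m <;> simp [hv] <;> omega
            · exact ⟨v₀, Finset.mem_univ v₀, by rw [hc2, if_pos hv₀']; omega⟩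
          omega
        exact ih w₂ m hmem2 hrep2 hle2 hsum2

end Unif

end Aux

/-- if `G` is word-representable and `K` is a vertex subset, then the
graph obtained from `G` by deleting all edges with both endpoints in `K` is
1-11-representable. -/
theorem k11Representable_deleteCliqueEdges {V : Type*} [DecidableEq V] [Fintype V]
    (G : SimpleGraph V) (K : Set V) (h : K11Representable G 0) :
    K11Representable (G.deleteEdges {e : Sym2 V | ∀ u ∈ e, u ∈ K}) 1 := by
  classical
  obtain ⟨w, hmem, hrep⟩ := h
  have hrep' : ∀ x y : V, x ≠ y →
      (G.Adj x y ↔ pattern11Count (w.filter (fun a => decide (a = x ∨ a = y))) = 0) := by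
    intro x y hxy
    rw [hrep x y hxy, Nat.le_zero]
  set m : ℕ := Finset.univ.sup (fun v => w.count v) with hm
  have hle : ∀ v : V, w.count v ≤ m :=
    fun v => Finset.le_sup (f := fun v => w.count v) (Finset.mem_univ v)
  obtain ⟨v', hmem', hrep2, hcnt⟩ :=
    unif G (∑ v : V, (m - w.count v)) w m hmem hrep' hle le_rfl
  set F : Finset V := (Set.toFinite K).toFinset with hF
  have hFK : ∀ a : V, a ∈ F ↔ a ∈ K := fun a => Set.Finite.mem_toFinset _
  refine ⟨dbl F (v' ++ v'), fun v => mem_dbl F _ (List.mem_append_left _ (hmem' v)), ?_⟩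
  intro x y hxy
  set Pb : V → Bool := fun a => decide (a = x ∨ a = y) with hPb
  set u : List V := v'.filter Pb with hu
  have hsub : ∀ a ∈ u, a = x ∨ a = y := by
    intro a ha
    have := (List.mem_filter.mp ha).2
    simpa [hPb] using this
  have hxu : x ∈ u := List.mem_filter.mpr ⟨hmem' x, by simp [hPb]⟩
  have hyu : y ∈ u := List.mem_filter.mpr ⟨hmem' y, by simp [hPb]⟩
  have hcx : u.count x = m := by rw [hu, List.count_filter (by simp [hPb])]; exact hcnt x
  have hcy : u.count y = m := by rw [hu, List.count_filter (by simp [hPb])]; exact hcnt y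
  -- main count computation
  have hfil : (dbl F (v' ++ v')).filter Pb = dbl F (u ++ u) := by
    rw [dbl_filter, List.filter_append]
  have hDK : ((u ++ u).toFinset ∩ F).card =
      (if x ∈ K then 1 else 0) + (if y ∈ K then 1 else 0) := by
    have hTF : (u ++ u).toFinset = {x, y} := by
      ext a
      simp only [List.toFinset_append, Finset.mem_union, List.mem_toFinset,
        Finset.mem_insert, Finset.mem_singleton]
      constructor
      · rintro (ha | ha) <;> exact hsub a ha
      · rintro (ha | ha) <;> subst ha
        · exact Or.inl hxu
        · exact Or.inl hyu
    rw [hTF]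
    by_cases hx : x ∈ K <;> by_cases hy : y ∈ K
    · have : ({x, y} : Finset V) ∩ F = {x, y} := by
        ext a
        simp only [Finset.mem_inter, Finset.mem_insert, Finset.mem_singleton, hFK]
        constructor
        · exact fun h => h.1
        · rintro (h | h) <;> subst h <;> exact ⟨by tauto, by assumption⟩
      rw [this, if_pos hx, if_pos hy, Finset.card_insert_of_notMem (by simp [hxy]),
        Finset.card_singleton]
    · have : ({x, y} : Finset V) ∩ F = {x} := by
        ext a
        simp only [Finset.mem_inter, Finset.mem_insert, Finset.mem_singleton, hFK]
        constructor
        · rintro ⟨h | h, h2⟩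
          · exact h
          · subst h; exact absurd h2 hy
        · intro h; subst h; exact ⟨Or.inl rfl, hx⟩
      rw [this, if_pos hx, if_neg hy, Finset.card_singleton]
    · have : ({x, y} : Finset V) ∩ F = {y} := by
        ext a
        simp only [Finset.mem_inter, Finset.mem_insert, Finset.mem_singleton, hFK]
        constructor
        · rintro ⟨h | h, h2⟩
          · subst h; exact absurd h2 hx
          · exact h
        · intro h; subst h; exact ⟨Or.inr rfl, hy⟩
      rw [this, if_neg hx, if_pos hy, Finset.card_singleton]
    · have : ({x, y} : Finset V) ∩ F = ∅ := by
        ext a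
        simp only [Finset.mem_inter, Finset.mem_insert, Finset.mem_singleton, hFK,
          Finset.notMem_empty, iff_false, not_and]
        rintro (h | h) <;> subst h <;> assumption
      rw [this, if_neg hx, if_neg hy, Finset.card_empty]
  have hGK : (G.deleteEdges {e : Sym2 V | ∀ u ∈ e, u ∈ K}).Adj x y ↔
      (G.Adj x y ∧ ¬(x ∈ K ∧ y ∈ K)) := by
    rw [SimpleGraph.deleteEdges_adj]
    constructor
    · rintro ⟨h1, h2⟩
      refine ⟨h1, fun hK => h2 ?_⟩
      intro z hz
      rcases Sym2.mem_iff.mp hz with h | h <;> subst h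
      · exact hK.1
      · exact hK.2
    · rintro ⟨h1, h2⟩
      refine ⟨h1, fun hK => h2 ?_⟩
      exact ⟨hK x (Sym2.mem_mk_left x y), hK y (Sym2.mem_mk_right x y)⟩
  -- compute pattern count of u ++ u
  have hpc2 : ∃ J, pattern11Count (u ++ u) = 2 * pattern11Count u + J ∧
      (J = if u.getLast? = u.head? then 1 else 0) := by
    have hne : u ≠ [] := by intro h; rw [h] at hxu; simp at hxu
    obtain ⟨a, t, hat⟩ := List.exists_cons_of_ne_nil hne
    refine ⟨if u.getLast? = some a then 1 else 0, ?_, ?_⟩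
    · rw [hat, pc_append_cons, ← hat]
      omega
    · rw [hat]; rfl
  obtain ⟨J, hJ1, hJ2⟩ := hpc2
  rw [hfil, pc_dbl, hJ1, hDK, hGK]
  by_cases hadj : G.Adj x y
  · have hu0 : pattern11Count u = 0 := (hrep2 x y hxy).mp hadj
    have hchain : List.Chain' (· ≠ ·) u := (pc_eq_zero_iff_chain' u).mp hu0
    have hJ0 : J = 0 := by
      rw [hJ2, if_neg (alt_last_ne_head hxy hchain hsub (by rw [hcx, hcy])
        (by intro h; rw [h] at hxu; simp at hxu))]
    rw [hu0, hJ0]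
    by_cases hx : x ∈ K <;> by_cases hy : y ∈ K <;>
      simp [hx, hy, hadj, hxy] <;> omega
  · have hu1 : pattern11Count u ≠ 0 := fun h0 => hadj ((hrep2 x y hxy).mpr h0)
    have : ¬ (2 * pattern11Count u + J + ((if x ∈ K then 1 else 0) + (if y ∈ K then 1 else 0)) ≤ 1) := by
      omega
    simp [hadj, this]
end

section
/- The class of word-representable graphs is strictly contained in the class of 1-11-representable graphs: every 0-11-representable simple graph is 1-11-representable, and the wheel graph W₅ is 1-11-representable but not 0-11-representable. In particular, the word 4325161521324354 over the alphabet {1,2,3,4,5,6} is a 1-11-representant of W₅. -/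
/-- The wheel graph `W₅` on the vertex set `{1,2,3,4,5,6}` (as `Fin 6`, where `6 = 0`):
the 5-cycle `1-2-3-4-5-1` together with all edges from `6` to `1,2,3,4,5`. -/
def wheelW5 : SimpleGraph (Fin 6) :=
  SimpleGraph.fromRel (fun a b =>
    (a, b) ∈ [((1 : Fin 6), 2), (2, 3), (3, 4), (4, 5), (5, 1),
              (6, 1), (6, 2), (6, 3), (6, 4), (6, 5)])

/-! ### Auxiliary lemmas about `pattern11Count` -/

theorem p11_cons_cons {V : Type*} [DecidableEq V] (a b : V) (l : List V) :
    pattern11Count (a :: b :: l) = (if a = b then 1 else 0) + pattern11Count (b :: l) := by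
  simp only [pattern11Count, List.tail_cons, List.zip_cons_cons, List.countP_cons]
  by_cases h : a = b <;> simp [h, Nat.add_comm]

theorem p11_append_le {V : Type*} [DecidableEq V] :
    ∀ u v : List V, pattern11Count (u ++ v) ≤ pattern11Count u + pattern11Count v + 1 := by
  intro u
  induction u with
  | nil => intro v; simp [pattern11Count]
  | cons a u ih =>
    intro v
    cases u with
    | nil =>
      cases v with
      | nil => simp [pattern11Count]
      | cons b v' =>
        rw [List.singleton_append, p11_cons_cons]
        have : pattern11Count [a] = 0 := rfl
        by_cases h : a = b <;> simp [h] <;> omega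
    | cons b u' =>
      have h1 : pattern11Count ((a :: b :: u') ++ v) =
          (if a = b then 1 else 0) + pattern11Count ((b :: u') ++ v) := by
        rw [List.cons_append, List.cons_append, p11_cons_cons, ← List.cons_append]
      have h2 := ih v
      rw [h1, p11_cons_cons]
      omega

theorem p11_append_ge {V : Type*} [DecidableEq V] :
    ∀ u v : List V, pattern11Count u + pattern11Count v ≤ pattern11Count (u ++ v) := by
  intro u
  induction u with
  | nil => intro v; simp [pattern11Count]
  | cons a u ih =>
    intro v
    cases u with
    | nil =>
      cases v with
      | nil => simp [pattern11Count]
      | cons b v' =>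
        rw [List.singleton_append, p11_cons_cons]
        have h1 : pattern11Count [a] = 0 := rfl
        rw [h1]
        by_cases h : a = b <;> simp [h]
    | cons b u' =>
      have h1 : pattern11Count ((a :: b :: u') ++ v) =
          (if a = b then 1 else 0) + pattern11Count ((b :: u') ++ v) := by
        rw [List.cons_append, List.cons_append, p11_cons_cons, ← List.cons_append]
      have h2 := ih v
      rw [h1, p11_cons_cons]
      omega

/-! ### Alternation vs. prefix-count windows, for words over two letters -/

theorem win_of_alt {V : Type*} [DecidableEq V] :
    ∀ (u : List V) (x y : V), x ≠ y → (∀ a ∈ u, a = x ∨ a = y) →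
      pattern11Count u = 0 → u.head? = some x →
      ∀ m, (u.take m).count y ≤ (u.take m).count x ∧
           (u.take m).count x ≤ (u.take m).count y + 1 := by
  intro u
  induction u with
  | nil => intro x y _ _ _ h; simp at h
  | cons a u ih =>
    intro x y hxy htwo h0 hhead m
    have hax : a = x := by simpa using hhead
    subst hax
    have htwo' : ∀ b ∈ u, b = y ∨ b = a := by
      intro b hb
      rcases htwo b (List.mem_cons_of_mem _ hb) with h | h
      · right; exact h
      · left; exact h
    have key : pattern11Count u = 0 ∧ (u = [] ∨ u.head? = some y) := by
      match u with
      | [] => exact ⟨rfl, Or.inl rfl⟩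
      | b :: u' =>
        have hc := p11_cons_cons a b u'
        rw [h0] at hc
        have hab : a ≠ b := by
          intro h; rw [if_pos h] at hc; omega
        have hby : b = y := by
          rcases htwo b (by simp) with h | h
          · exact absurd h.symm hab
          · exact h
        rw [if_neg hab] at hc
        exact ⟨by omega, Or.inr (by simp [hby])⟩
    have hwin' : ∀ k, (u.take k).count a ≤ (u.take k).count y ∧
        (u.take k).count y ≤ (u.take k).count a + 1 := by
      rcases key.2 with h | h
      · subst h; simp
      · exact ih y a (Ne.symm hxy) htwo' key.1 h
    cases m with
    | zero => simp
    | succ m =>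
      rw [List.take_succ_cons]
      have := hwin' m
      simp [List.count_cons, hxy]
      omega

theorem alt_of_win {V : Type*} [DecidableEq V] :
    ∀ (u : List V) (x y : V), x ≠ y → (∀ a ∈ u, a = x ∨ a = y) →
      (∀ m, (u.take m).count y ≤ (u.take m).count x ∧
            (u.take m).count x ≤ (u.take m).count y + 1) →
      pattern11Count u = 0 := by
  intro u
  induction u with
  | nil => intro x y _ _ _; rfl
  | cons a u ih =>
    intro x y hxy htwo hwin
    have hax : a = x := by
      rcases htwo a (by simp) with h | h
      · exact h
      · exfalso
        subst h
        have h1 := hwin 1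
        simp [List.count_cons, Ne.symm hxy] at h1
    subst hax
    have htwo' : ∀ b ∈ u, b = y ∨ b = a := by
      intro b hb
      rcases htwo b (List.mem_cons_of_mem _ hb) with h | h
      · right; exact h
      · left; exact h
    have hwin' : ∀ k, (u.take k).count a ≤ (u.take k).count y ∧
        (u.take k).count y ≤ (u.take k).count a + 1 := by
      intro k
      have := hwin (k + 1)
      rw [List.take_succ_cons] at this
      simp [List.count_cons, hxy] at this
      omega
    have h0 : pattern11Count u = 0 := ih y a (Ne.symm hxy) htwo' hwin'
    match u, h0 with
    | [], _ => rfl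
    | b :: u', h0 =>
      have hab : a ≠ b := by
        intro h
        subst h
        have h2 := hwin 2
        rw [show (2:ℕ) = 1 + 1 from rfl, List.take_succ_cons, List.take_succ_cons] at h2
        simp [List.count_cons, hxy] at h2
      rw [p11_cons_cons, if_neg hab, h0]

/-! ### Transfer between prefixes of the filtered word and filtered prefixes -/

theorem filter_of_take {V : Type*} (p : V → Bool) (w : List V) (n : ℕ) :
    (w.take n).filter p = (w.filter p).take ((w.take n).filter p).length := by
  have h : w.filter p = (w.take n).filter p ++ (w.drop n).filter p := by
    rw [← List.filter_append, List.take_append_drop]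
  rw [h, List.take_left]

theorem take_of_filter {V : Type*} (p : V → Bool) :
    ∀ (w : List V) (m : ℕ), ∃ n, (w.filter p).take m = (w.take n).filter p := by
  intro w
  induction w with
  | nil => intro m; exact ⟨0, by simp⟩
  | cons a w ih =>
    intro m
    by_cases hpa : p a
    · cases m with
      | zero => exact ⟨0, by simp⟩
      | succ m =>
        obtain ⟨n, hn⟩ := ih m
        exact ⟨n + 1, by simp [List.filter_cons, hpa, List.take_succ_cons, hn]⟩
    · obtain ⟨n, hn⟩ := ih m
      refine ⟨n + 1, ?_⟩
      have hpa' : p a = false := by simpa using hpa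
      simp [List.filter_cons, hpa', hn]

section
variable {V : Type*} [DecidableEq V]

theorem altT (x y : V) (hxy : x ≠ y) (w : List V)
    (h0 : pattern11Count (w.filter (fun a => decide (a = x ∨ a = y))) = 0) :
    (∀ n, (w.take n).count y ≤ (w.take n).count x ∧
          (w.take n).count x ≤ (w.take n).count y + 1) ∨
    (∀ n, (w.take n).count x ≤ (w.take n).count y ∧
          (w.take n).count y ≤ (w.take n).count x + 1) := by
  have htwo : ∀ a ∈ w.filter (fun a => decide (a = x ∨ a = y)), a = x ∨ a = y := by
    intro a ha; simpa using List.of_mem_filter ha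
  have trans : ∀ n, ∃ m,
      (w.take n).count x = ((w.filter (fun a => decide (a = x ∨ a = y))).take m).count x ∧
      (w.take n).count y = ((w.filter (fun a => decide (a = x ∨ a = y))).take m).count y := by
    intro n
    refine ⟨((w.take n).filter (fun a => decide (a = x ∨ a = y))).length, ?_, ?_⟩
    · rw [← filter_of_take]; exact (List.count_filter (by simp)).symm
    · rw [← filter_of_take]; exact (List.count_filter (by simp)).symm
  rcases hue : w.filter (fun a => decide (a = x ∨ a = y)) with _ | ⟨a, u'⟩
  · left
    intro n
    obtain ⟨m, ex, ey⟩ := trans n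
    rw [hue] at ex ey
    simp at ex ey
    omega
  · have ha : a = x ∨ a = y := htwo a (by rw [hue]; simp)
    rcases ha with ha | ha
    · left
      intro n
      obtain ⟨m, ex, ey⟩ := trans n
      rw [ex, ey]
      exact win_of_alt _ x y hxy htwo h0 (by rw [hue, ha]; rfl) m
    · right
      intro n
      obtain ⟨m, ex, ey⟩ := trans n
      rw [ex, ey]
      exact win_of_alt _ y x hxy.symm (fun b hb => (htwo b hb).symm) h0 (by rw [hue, ha]; rfl) m

theorem naltT (x y : V) (hxy : x ≠ y) (w : List V)
    (h0 : pattern11Count (w.filter (fun a => decide (a = x ∨ a = y))) ≠ 0) :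
    (∃ n, (w.take n).count x < (w.take n).count y ∨
          (w.take n).count y + 2 ≤ (w.take n).count x) ∧
    (∃ n, (w.take n).count y < (w.take n).count x ∨
          (w.take n).count x + 2 ≤ (w.take n).count y) := by
  have htwo : ∀ a ∈ w.filter (fun a => decide (a = x ∨ a = y)), a = x ∨ a = y := by
    intro a ha; simpa using List.of_mem_filter ha
  have trans : ∀ m, ∃ n,
      ((w.filter (fun a => decide (a = x ∨ a = y))).take m).count x = (w.take n).count x ∧
      ((w.filter (fun a => decide (a = x ∨ a = y))).take m).count y = (w.take n).count y := by
    intro m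
    obtain ⟨n, hn⟩ := take_of_filter (fun a => decide (a = x ∨ a = y)) w m
    exact ⟨n, by rw [hn]; exact List.count_filter (by simp),
               by rw [hn]; exact List.count_filter (by simp)⟩
  constructor
  · by_contra h
    push_neg at h
    apply h0
    apply alt_of_win _ x y hxy htwo
    intro m
    obtain ⟨n, ex, ey⟩ := trans m
    rw [ex, ey]
    have := h n
    omega
  · by_contra h
    push_neg at h
    apply h0
    apply alt_of_win _ y x hxy.symm (fun b hb => (htwo b hb).symm)
    intro m
    obtain ⟨n, ex, ey⟩ := trans m
    rw [ex, ey]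
    have := h n
    omega

end

/-! ### The finite combinatorial core: the prefix-count conditions of `W₅` are contradictory -/

set_option maxHeartbeats 12000000 in
theorem core (c0 c1 c2 c3 c4 c5 : ℕ → ℕ)
    (a12 : (∀ n, c2 n ≤ c1 n ∧ c1 n ≤ c2 n + 1) ∨ (∀ n, c1 n ≤ c2 n ∧ c2 n ≤ c1 n + 1))
    (a23 : (∀ n, c3 n ≤ c2 n ∧ c2 n ≤ c3 n + 1) ∨ (∀ n, c2 n ≤ c3 n ∧ c3 n ≤ c2 n + 1))
    (a34 : (∀ n, c4 n ≤ c3 n ∧ c3 n ≤ c4 n + 1) ∨ (∀ n, c3 n ≤ c4 n ∧ c4 n ≤ c3 n + 1))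
    (a45 : (∀ n, c5 n ≤ c4 n ∧ c4 n ≤ c5 n + 1) ∨ (∀ n, c4 n ≤ c5 n ∧ c5 n ≤ c4 n + 1))
    (a51 : (∀ n, c1 n ≤ c5 n ∧ c5 n ≤ c1 n + 1) ∨ (∀ n, c5 n ≤ c1 n ∧ c1 n ≤ c5 n + 1))
    (a10 : (∀ n, c0 n ≤ c1 n ∧ c1 n ≤ c0 n + 1) ∨ (∀ n, c1 n ≤ c0 n ∧ c0 n ≤ c1 n + 1))
    (a20 : (∀ n, c0 n ≤ c2 n ∧ c2 n ≤ c0 n + 1) ∨ (∀ n, c2 n ≤ c0 n ∧ c0 n ≤ c2 n + 1))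
    (a30 : (∀ n, c0 n ≤ c3 n ∧ c3 n ≤ c0 n + 1) ∨ (∀ n, c3 n ≤ c0 n ∧ c0 n ≤ c3 n + 1))
    (a40 : (∀ n, c0 n ≤ c4 n ∧ c4 n ≤ c0 n + 1) ∨ (∀ n, c4 n ≤ c0 n ∧ c0 n ≤ c4 n + 1))
    (a50 : (∀ n, c0 n ≤ c5 n ∧ c5 n ≤ c0 n + 1) ∨ (∀ n, c5 n ≤ c0 n ∧ c0 n ≤ c5 n + 1))
    (n13 : (∃ n, c1 n < c3 n ∨ c3 n + 2 ≤ c1 n) ∧ (∃ n, c3 n < c1 n ∨ c1 n + 2 ≤ c3 n))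
    (n24 : (∃ n, c2 n < c4 n ∨ c4 n + 2 ≤ c2 n) ∧ (∃ n, c4 n < c2 n ∨ c2 n + 2 ≤ c4 n))
    (n35 : (∃ n, c3 n < c5 n ∨ c5 n + 2 ≤ c3 n) ∧ (∃ n, c5 n < c3 n ∨ c3 n + 2 ≤ c5 n))
    (n41 : (∃ n, c4 n < c1 n ∨ c1 n + 2 ≤ c4 n) ∧ (∃ n, c1 n < c4 n ∨ c4 n + 2 ≤ c1 n))
    (n52 : (∃ n, c5 n < c2 n ∨ c2 n + 2 ≤ c5 n) ∧ (∃ n, c2 n < c5 n ∨ c5 n + 2 ≤ c2 n)) :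
    False := by
  rcases a12 with h12 | h12 <;> rcases a23 with h23 | h23 <;> rcases a34 with h34 | h34 <;>
  rcases a45 with h45 | h45 <;> rcases a51 with h51 | h51 <;> rcases a10 with h10 | h10 <;>
  rcases a20 with h20 | h20 <;> rcases a30 with h30 | h30 <;> rcases a40 with h40 | h40 <;>
  rcases a50 with h50 | h50 <;>
  first
  | (obtain ⟨n, hn⟩ := n13.1; have k1 := h12 n; have k2 := h23 n; have k3 := h34 n;
     have k4 := h45 n; have k5 := h51 n; have k6 := h10 n; have k7 := h20 n;
     have k8 := h30 n; have k9 := h40 n; have k10 := h50 n; omega)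
  | (obtain ⟨n, hn⟩ := n13.2; have k1 := h12 n; have k2 := h23 n; have k3 := h34 n;
     have k4 := h45 n; have k5 := h51 n; have k6 := h10 n; have k7 := h20 n;
     have k8 := h30 n; have k9 := h40 n; have k10 := h50 n; omega)
  | (obtain ⟨n, hn⟩ := n24.1; have k1 := h12 n; have k2 := h23 n; have k3 := h34 n;
     have k4 := h45 n; have k5 := h51 n; have k6 := h10 n; have k7 := h20 n;
     have k8 := h30 n; have k9 := h40 n; have k10 := h50 n; omega)
  | (obtain ⟨n, hn⟩ := n24.2; have k1 := h12 n; have k2 := h23 n; have k3 := h34 n;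
     have k4 := h45 n; have k5 := h51 n; have k6 := h10 n; have k7 := h20 n;
     have k8 := h30 n; have k9 := h40 n; have k10 := h50 n; omega)
  | (obtain ⟨n, hn⟩ := n35.1; have k1 := h12 n; have k2 := h23 n; have k3 := h34 n;
     have k4 := h45 n; have k5 := h51 n; have k6 := h10 n; have k7 := h20 n;
     have k8 := h30 n; have k9 := h40 n; have k10 := h50 n; omega)
  | (obtain ⟨n, hn⟩ := n35.2; have k1 := h12 n; have k2 := h23 n; have k3 := h34 n;
     have k4 := h45 n; have k5 := h51 n; have k6 := h10 n; have k7 := h20 n;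
     have k8 := h30 n; have k9 := h40 n; have k10 := h50 n; omega)
  | (obtain ⟨n, hn⟩ := n41.1; have k1 := h12 n; have k2 := h23 n; have k3 := h34 n;
     have k4 := h45 n; have k5 := h51 n; have k6 := h10 n; have k7 := h20 n;
     have k8 := h30 n; have k9 := h40 n; have k10 := h50 n; omega)
  | (obtain ⟨n, hn⟩ := n41.2; have k1 := h12 n; have k2 := h23 n; have k3 := h34 n;
     have k4 := h45 n; have k5 := h51 n; have k6 := h10 n; have k7 := h20 n;
     have k8 := h30 n; have k9 := h40 n; have k10 := h50 n; omega)
  | (obtain ⟨n, hn⟩ := n52.1; have k1 := h12 n; have k2 := h23 n; have k3 := h34 n;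
     have k4 := h45 n; have k5 := h51 n; have k6 := h10 n; have k7 := h20 n;
     have k8 := h30 n; have k9 := h40 n; have k10 := h50 n; omega)
  | (obtain ⟨n, hn⟩ := n52.2; have k1 := h12 n; have k2 := h23 n; have k3 := h34 n;
     have k4 := h45 n; have k5 := h51 n; have k6 := h10 n; have k7 := h20 n;
     have k8 := h30 n; have k9 := h40 n; have k10 := h50 n; omega)

/-! ### Decidability of adjacency in `W₅` -/

instance : DecidableRel wheelW5.Adj := fun a b =>
  decidable_of_iff _ (SimpleGraph.fromRel_adj _ a b).symm

/-! ### From a 0-11-representant to a 1-11-representant -/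

theorem zero_to_one {V : Type} [DecidableEq V] (G : SimpleGraph V) :
    K11Representable G 0 → K11Representable G 1 := by
  rintro ⟨w, hall, hadj⟩
  refine ⟨w ++ w, fun v => List.mem_append_left _ (hall v), ?_⟩
  intro x y hxy
  rw [List.filter_append]
  have h := hadj x y hxy
  constructor
  · intro hA
    have h0 : pattern11Count (w.filter (fun a => decide (a = x ∨ a = y))) = 0 :=
      Nat.le_zero.mp (h.mp hA)
    have := p11_append_le (w.filter (fun a => decide (a = x ∨ a = y)))
      (w.filter (fun a => decide (a = x ∨ a = y)))
    omega
  · intro hle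
    apply h.mpr
    have := p11_append_ge (w.filter (fun a => decide (a = x ∨ a = y)))
      (w.filter (fun a => decide (a = x ∨ a = y)))
    omega

/-! ### `W₅` is not 0-11-representable -/

theorem wheel_not_zero : ¬ K11Representable wheelW5 0 := by
  rintro ⟨w, hall, hadj⟩
  have A : ∀ x y : Fin 6, x ≠ y → wheelW5.Adj x y →
      (∀ n, (w.take n).count y ≤ (w.take n).count x ∧
            (w.take n).count x ≤ (w.take n).count y + 1) ∨
      (∀ n, (w.take n).count x ≤ (w.take n).count y ∧
            (w.take n).count y ≤ (w.take n).count x + 1) := by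
    intro x y hxy hA
    exact altT x y hxy w (Nat.le_zero.mp ((hadj x y hxy).mp hA))
  have N : ∀ x y : Fin 6, x ≠ y → ¬ wheelW5.Adj x y →
      (∃ n, (w.take n).count x < (w.take n).count y ∨
            (w.take n).count y + 2 ≤ (w.take n).count x) ∧
      (∃ n, (w.take n).count y < (w.take n).count x ∨
            (w.take n).count x + 2 ≤ (w.take n).count y) := by
    intro x y hxy hA
    refine naltT x y hxy w (fun h0 => hA ((hadj x y hxy).mpr (by omega)))
  exact core (fun n => (w.take n).count 0) (fun n => (w.take n).count 1)
    (fun n => (w.take n).count 2) (fun n => (w.take n).count 3)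
    (fun n => (w.take n).count 4) (fun n => (w.take n).count 5)
    (A 1 2 (by decide) (by decide)) (A 2 3 (by decide) (by decide))
    (A 3 4 (by decide) (by decide)) (A 4 5 (by decide) (by decide))
    (A 5 1 (by decide) (by decide)) (A 1 0 (by decide) (by decide))
    (A 2 0 (by decide) (by decide)) (A 3 0 (by decide) (by decide))
    (A 4 0 (by decide) (by decide)) (A 5 0 (by decide) (by decide))
    (N 1 3 (by decide) (by decide)) (N 2 4 (by decide) (by decide))
    (N 3 5 (by decide) (by decide)) (N 4 1 (by decide) (by decide))
    (N 5 2 (by decide) (by decide))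

/-- the class of word-representable (0-11-representable) graphs is strictly
contained in the class of 1-11-representable graphs: every 0-11-representable graph is
1-11-representable, while `W₅` is 1-11-representable (with the explicit
1-11-representant 4325161521324354) but not 0-11-representable. -/
theorem wordRepresentable_ssubset_one_eleven :
    (∀ (V : Type) [DecidableEq V] [Fintype V] (G : SimpleGraph V),
        K11Representable G 0 → K11Representable G 1) ∧
    IsK11Rep wheelW5 1
      ([4, 3, 2, 5, 1, 6, 1, 5, 2, 1, 3, 2, 4, 3, 5, 4] : List (Fin 6)) ∧
    K11Representable wheelW5 1 ∧
    ¬ K11Representable wheelW5 0 := by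
  have hword : IsK11Rep wheelW5 1
      ([4, 3, 2, 5, 1, 6, 1, 5, 2, 1, 3, 2, 4, 3, 5, 4] : List (Fin 6)) := by
    constructor
    · decide
    · decide
  exact ⟨fun V _ _ G => zero_to_one G, hword, ⟨_, hword⟩, wheel_not_zero⟩
end
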